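/- arXiv:1212.6447 — 5 statements merged into one kernel-verified Lean document; each statement's English description precedes it below -/
import Mathlib

section
/- Let G ⊆ ℂⁿ be a domain and f₁, f₂ : G → ℂ functions with f₁(z) ≠ 0 for all z ∈ G. Then the following are equivalent: (i) −1 does not belong to the closure of the image (f₂/f₁)(G); (ii) there exists c₀ > 0 such that |f₁(z) + f₂(z)| ≥ c₀(|f₁(z)| + |f₂(z)|) for all z ∈ G. -/
private lemma key_ineq (d t u : ℝ) (hd : 0 < d) (hd1 : d ≤ 1) (hu : d ≤ u)
    (htu : t - 1 ≤ u) (ht : 0 ≤ t) : d / 3 * (1 + t) ≤ u := by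
  rcases le_or_gt t 2 with h | h
  · nlinarith
  · nlinarith

/-- Triangle lemma: for `f₁` nonvanishing on a domain `G ⊆ ℂⁿ`,
`-1 ∉ closure ((f₂/f₁)(G))` iff `|f₁+f₂| ≥ c₀(|f₁|+|f₂|)` on `G` for some `c₀ > 0`. -/
theorem stmt0 {n : ℕ} (G : Set (Fin n → ℂ)) (hGopen : IsOpen G) (hGconn : IsConnected G)
    (f₁ f₂ : (Fin n → ℂ) → ℂ) (h₁ : ∀ z ∈ G, f₁ z ≠ 0) :
    ((-1 : ℂ) ∉ closure ((fun z => f₂ z / f₁ z) '' G)) ↔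
      ∃ c₀ > (0 : ℝ), ∀ z ∈ G,
        c₀ * (‖f₁ z‖ + ‖f₂ z‖) ≤ ‖f₁ z + f₂ z‖ := by
  have habs : ∀ z ∈ G, ‖f₁ z + f₂ z‖
      = ‖f₁ z‖ * ‖1 + f₂ z / f₁ z‖ := by
    intro z hz
    have h0 := h₁ z hz
    rw [← norm_mul]
    congr 1
    field_simp
  have habs2 : ∀ z ∈ G, ‖f₂ z‖
      = ‖f₁ z‖ * ‖f₂ z / f₁ z‖ := by
    intro z hz
    have h0 := h₁ z hz
    rw [← norm_mul]
    congr 1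
    field_simp
  constructor
  · intro h
    rw [Metric.mem_closure_iff] at h
    push_neg at h
    obtain ⟨δ, hδ, hball⟩ := h
    refine ⟨min δ 1 / 3, by positivity, fun z hz => ?_⟩
    set w := f₂ z / f₁ z with hw
    have hwmem : w ∈ (fun z => f₂ z / f₁ z) '' G := ⟨z, hz, rfl⟩
    have hdist : δ ≤ ‖1 + w‖ := by
      have h' := hball w hwmem
      rw [Complex.dist_eq] at h'
      have he : ‖-1 - w‖ = ‖1 + w‖ := by
        rw [← norm_neg]; ring_nf
      rw [he] at h'
      linarith
    have ha : 0 < ‖f₁ z‖ := by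
      simpa using (norm_pos_iff.mpr (h₁ z hz))
    rw [habs z hz, habs2 z hz]
    have h1 : min δ 1 ≤ ‖1 + w‖ := le_trans (min_le_left _ _) hdist
    have h2 : ‖w‖ - 1 ≤ ‖1 + w‖ := by
      have h3 := norm_add_le (1 + w) (-1)
      simp at h3
      linarith
    have key := key_ineq (min δ 1) (‖w‖) (‖1 + w‖)
      (by positivity) (min_le_right _ _) h1 h2 (norm_nonneg w)
    calc min δ 1 / 3 * (‖f₁ z‖ + ‖f₁ z‖ * ‖w‖)
        = ‖f₁ z‖ * (min δ 1 / 3 * (1 + ‖w‖)) := by ring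
      _ ≤ ‖f₁ z‖ * ‖1 + w‖ :=
          mul_le_mul_of_nonneg_left key ha.le
  · rintro ⟨c₀, hc₀, h⟩ hcl
    rw [Metric.mem_closure_iff] at hcl
    obtain ⟨w, ⟨z, hz, rfl⟩, hd⟩ := hcl c₀ hc₀
    set w := f₂ z / f₁ z with hw
    have ha : 0 < ‖f₁ z‖ := norm_pos_iff.mpr (h₁ z hz)
    have hzineq := h z hz
    rw [habs z hz, habs2 z hz] at hzineq
    have hkey : c₀ * (1 + ‖w‖) ≤ ‖1 + w‖ := by
      have := (mul_le_mul_iff_of_pos_left ha).mp (by linarith [hzineq] : ‖f₁ z‖ * (c₀ * (1 + ‖w‖)) ≤ ‖f₁ z‖ * ‖1 + w‖)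
      exact this
    have hdist : dist (-1) w = ‖1 + w‖ := by
      rw [Complex.dist_eq, ← norm_neg]; ring_nf
    rw [hdist] at hd
    nlinarith [norm_nonneg w]
end

section
/- Let φ₀ ∈ (0, π/2) and φ ∈ (0, φ₀). Define ω_±(λ, z) = √(λ + κ + c_± z) (principal branch of the square root), where c_± > 0 are fixed constants. Then there exists c₀ > 0 such that |ω_±(λ, z)| ≥ c₀(√|λ| + √κ + c_± √|z|) for all λ in the open sector Σ_{π−φ₀} = {λ ∈ ℂ \ {0} : |arg λ| < π − φ₀}, all z in the sector Σ_φ = {z ∈ ℂ \ {0} : |arg z| < φ}, and all κ ∈ [1, ∞). -/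
open Real

private lemma sqrt3_bound (x y u : ℝ) (hx : 0 ≤ x) (hy : 0 ≤ y) (hu : 0 ≤ u) :
    Real.sqrt x + Real.sqrt y + Real.sqrt u ≤ Real.sqrt 3 * Real.sqrt (x + y + u) := by
  have h2 : (Real.sqrt x + Real.sqrt y + Real.sqrt u) ^ 2 ≤ 3 * (x + y + u) := by
    nlinarith [Real.sq_sqrt hx, Real.sq_sqrt hy, Real.sq_sqrt hu,
      sq_nonneg (Real.sqrt x - Real.sqrt y), sq_nonneg (Real.sqrt x - Real.sqrt u),
      sq_nonneg (Real.sqrt y - Real.sqrt u)]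
  calc Real.sqrt x + Real.sqrt y + Real.sqrt u
      = Real.sqrt ((Real.sqrt x + Real.sqrt y + Real.sqrt u) ^ 2) :=
        (Real.sqrt_sq (by positivity)).symm
    _ ≤ Real.sqrt (3 * (x + y + u)) := Real.sqrt_le_sqrt h2
    _ = Real.sqrt 3 * Real.sqrt (x + y + u) := Real.sqrt_mul (by norm_num) _

/-- If the arguments of `a` and `b` satisfy `|arg a| + |arg b| ≤ π - δ` with `0 < δ ≤ π`,
then `|a + b|` is bounded below by a constant times `|a| + |b|`. -/
private lemma sector_sum (a b : ℂ) (δ : ℝ) (ha : a ≠ 0) (hb : b ≠ 0)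
    (hδ : 0 < δ) (hδπ : δ ≤ π) (hsum : |a.arg| + |b.arg| ≤ π - δ) :
    Real.sqrt ((1 - Real.cos δ) / 2) * (‖a‖ + ‖b‖)
      ≤ ‖a + b‖ := by
  set A := ‖a‖ with hA
  set B := ‖b‖ with hB
  have hA0 : 0 < A := norm_pos_iff.mpr ha
  have hB0 : 0 < B := norm_pos_iff.mpr hb
  set α := a.arg
  set β := b.arg
  have hare : a.re = A * Real.cos α := (Complex.norm_mul_cos_arg a).symm
  have haim : a.im = A * Real.sin α := (Complex.norm_mul_sin_arg a).symm
  have hbre : b.re = B * Real.cos β := (Complex.norm_mul_cos_arg b).symm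
  have hbim : b.im = B * Real.sin β := (Complex.norm_mul_sin_arg b).symm
  have h1 : ‖a + b‖ ^ 2 = A ^ 2 + B ^ 2 + 2 * A * B * Real.cos (α - β) := by
    rw [Complex.sq_norm, Complex.normSq_apply, Complex.add_re, Complex.add_im,
      hare, haim, hbre, hbim, Real.cos_sub]
    have h3 : Real.sin α ^ 2 + Real.cos α ^ 2 = 1 := Real.sin_sq_add_cos_sq α
    have h4 : Real.sin β ^ 2 + Real.cos β ^ 2 = 1 := Real.sin_sq_add_cos_sq β
    nlinarith [h3, h4]
  have hcos : -Real.cos δ ≤ Real.cos (α - β) := by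
    have habs : |α - β| ≤ π - δ := by
      calc |α - β| ≤ |α| + |β| := abs_sub _ _
        _ ≤ π - δ := hsum
    have h5 : Real.cos (π - δ) ≤ Real.cos |α - β| :=
      Real.cos_le_cos_of_nonneg_of_le_pi (abs_nonneg _) (by linarith) habs
    rw [Real.cos_pi_sub] at h5
    rwa [Real.cos_abs] at h5
  have hcδ : Real.cos δ ≤ 1 := Real.cos_le_one δ
  have h2 : (1 - Real.cos δ) / 2 * (A + B) ^ 2 ≤ ‖a + b‖ ^ 2 := by
    rw [h1]
    nlinarith [sq_nonneg (A - B), mul_pos hA0 hB0, Real.neg_one_le_cos δ, hcos]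
  calc Real.sqrt ((1 - Real.cos δ) / 2) * (A + B)
      = Real.sqrt ((1 - Real.cos δ) / 2 * (A + B) ^ 2) := by
        rw [Real.sqrt_mul (by linarith), Real.sqrt_sq (by positivity)]
    _ ≤ Real.sqrt (‖a + b‖ ^ 2) := Real.sqrt_le_sqrt h2
    _ = ‖a + b‖ := Real.sqrt_sq (norm_nonneg _)

set_option maxHeartbeats 1000000 in
/-- Lower bound for the modulus of `ω(λ,z) = √(λ+κ+cz)` (principal branch), uniformly for
`λ ∈ Σ_{π-φ₀}`, `z ∈ Σ_φ`, `κ ≥ 1`. -/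
theorem stmt1 (φ₀ φ c : ℝ) (hφ₀ : φ₀ ∈ Set.Ioo 0 (π / 2)) (hφ : φ ∈ Set.Ioo 0 φ₀)
    (hc : 0 < c) :
    ∃ c₀ > (0 : ℝ), ∀ (l z : ℂ) (κ : ℝ), 1 ≤ κ →
      l ≠ 0 → |l.arg| < π - φ₀ → z ≠ 0 → |z.arg| < φ →
      c₀ * (Real.sqrt (‖l‖) + Real.sqrt κ + c * Real.sqrt (‖z‖))
        ≤ ‖(l + (κ : ℂ) + (c : ℂ) * z) ^ ((1 : ℂ) / 2)‖ := by
  obtain ⟨hφ₀0, hφ₀2⟩ := hφ₀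
  obtain ⟨hφ0, hφφ₀⟩ := hφ
  set δ := φ₀ - φ with hδdef
  have hδ : 0 < δ := by simp [hδdef]; linarith
  have hδπ : δ ≤ π := by
    have := Real.pi_pos; simp only [hδdef]; linarith
  have hcosφ : 0 < Real.cos φ := Real.cos_pos_of_mem_Ioo ⟨by linarith, by linarith⟩
  have hcosδ : Real.cos δ < 1 := by
    have := Real.cos_lt_cos_of_nonneg_of_le_pi le_rfl hδπ hδ
    rwa [Real.cos_zero] at this
  set s := Real.sqrt ((1 - Real.cos δ) / 2) with hs
  have hs0 : 0 < s := Real.sqrt_pos.mpr (by linarith)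
  set m := min 1 (Real.cos φ) with hm
  have hm0 : 0 < m := lt_min one_pos hcosφ
  set C := s * m with hC
  have hC0 : 0 < C := mul_pos hs0 hm0
  set c₀ := Real.sqrt C / Real.sqrt 3 * min 1 (1 / Real.sqrt c) with hc₀
  have hsc : 0 < Real.sqrt c := Real.sqrt_pos.mpr hc
  have hc₀0 : 0 < c₀ := by
    apply mul_pos (div_pos (Real.sqrt_pos.mpr hC0) (by positivity))
    exact lt_min one_pos (by positivity)
  refine ⟨c₀, hc₀0, ?_⟩
  intro l z κ hκ hl hargl hz hargz
  set b : ℂ := (κ : ℂ) + (c : ℂ) * z with hbdef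
  have hκ0 : (0 : ℝ) < κ := by linarith
  have hzre : ‖z‖ * Real.cos φ ≤ z.re := by
    have h1 : z.re = ‖z‖ * Real.cos z.arg := (Complex.norm_mul_cos_arg z).symm
    have h2 : Real.cos φ ≤ Real.cos z.arg := by
      have h3 := Real.cos_le_cos_of_nonneg_of_le_pi (abs_nonneg z.arg)
        (by linarith [Real.pi_gt_three]) hargz.le
      rwa [Real.cos_abs] at h3
    rw [h1]
    exact mul_le_mul_of_nonneg_left h2 (norm_nonneg z)
  have hzim : |z.im| ≤ ‖z‖ * Real.sin φ := by
    have h1 : z.im = ‖z‖ * Real.sin z.arg := (Complex.norm_mul_sin_arg z).symm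
    have hza := abs_lt.mp hargz
    have h2 : |Real.sin z.arg| ≤ Real.sin φ := by
      rw [abs_le]
      constructor
      · have h3 := Real.sin_le_sin_of_le_of_le_pi_div_two
          (show -(π/2) ≤ -φ by linarith) (show z.arg ≤ π/2 by linarith) hza.1.le
        rwa [Real.sin_neg] at h3
      · exact Real.sin_le_sin_of_le_of_le_pi_div_two (by linarith) (by linarith) hza.2.le
    rw [h1, abs_mul, abs_of_nonneg (norm_nonneg z)]
    exact mul_le_mul_of_nonneg_left h2 (norm_nonneg z)
  have hbre : b.re = κ + c * z.re := by simp [hbdef]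
  have hbim : b.im = c * z.im := by simp [hbdef]
  have hbre0 : 0 < b.re := by
    rw [hbre]
    have h1 := mul_le_mul_of_nonneg_left hzre hc.le
    have h2 : (0:ℝ) ≤ c * (‖z‖ * Real.cos φ) := by positivity
    linarith
  have hb0 : b ≠ 0 := fun h => by rw [h] at hbre0; simp at hbre0
  -- |arg b| ≤ φ
  have hargb : |b.arg| ≤ φ := by
    by_contra hcon
    push_neg at hcon
    have hb2 : |b.arg| < π / 2 := Complex.abs_arg_lt_pi_div_two_iff.mpr (Or.inl hbre0)
    have htan : Real.tan φ < Real.tan |b.arg| :=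
      Real.tan_lt_tan_of_nonneg_of_lt_pi_div_two hφ0.le hb2 hcon
    have htanabs : Real.tan |b.arg| = |Real.tan b.arg| := by
      rcases le_or_gt 0 b.arg with h | h
      · rw [abs_of_nonneg h, abs_of_nonneg
          (Real.tan_nonneg_of_nonneg_of_le_pi_div_two h
            (by rw [abs_of_nonneg h] at hb2; linarith))]
      · have h4 : 0 ≤ Real.tan (-b.arg) :=
          Real.tan_nonneg_of_nonneg_of_le_pi_div_two (by linarith)
            (by rw [abs_of_neg h] at hb2; linarith)
        have h5 : Real.tan b.arg ≤ 0 := by rw [Real.tan_neg] at h4; linarith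
        rw [abs_of_neg h, abs_of_nonpos h5, ← Real.tan_neg]
    have htb : Real.tan b.arg = b.im / b.re := Complex.tan_arg b
    have hbound : |b.im| ≤ Real.tan φ * b.re := by
      rw [hbim, abs_mul, abs_of_nonneg hc.le]
      have h1 : c * |z.im| ≤ c * (‖z‖ * Real.sin φ) :=
        mul_le_mul_of_nonneg_left hzim hc.le
      have htφ : 0 ≤ Real.tan φ :=
        Real.tan_nonneg_of_nonneg_of_le_pi_div_two hφ0.le (by linarith)
      have h2 : Real.tan φ * (c * (‖z‖ * Real.cos φ)) ≤ Real.tan φ * (κ + c * z.re) := by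
        apply mul_le_mul_of_nonneg_left _ htφ
        have h5 := mul_le_mul_of_nonneg_left hzre hc.le
        linarith
      have h3 : Real.tan φ * (c * (‖z‖ * Real.cos φ))
          = c * (‖z‖ * Real.sin φ) := by
        rw [Real.tan_eq_sin_div_cos]
        field_simp
      rw [hbre]
      linarith
    have hfrac : |Real.tan b.arg| ≤ Real.tan φ := by
      rw [htb, abs_div, abs_of_pos hbre0, div_le_iff₀ hbre0]
      exact hbound
    rw [htanabs] at htan
    linarith
  -- key lower bound on |l + b|
  have hsum : |l.arg| + |b.arg| ≤ π - δ := by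
    simp only [hδdef]; linarith
  have hkey : s * (‖l‖ + ‖b‖) ≤ ‖l + b‖ :=
    sector_sum l b δ hl hb0 hδ hδπ hsum
  have hBlow : m * (κ + c * ‖z‖) ≤ ‖b‖ := by
    have h1 : b.re ≤ ‖b‖ := Complex.re_le_norm b
    have h2 : m * (κ + c * ‖z‖) ≤ κ + c * (‖z‖ * Real.cos φ) := by
      have hm1 : m ≤ 1 := min_le_left _ _
      have hm2 : m ≤ Real.cos φ := min_le_right _ _
      have e1 : m * κ ≤ κ := by nlinarith
      have e2 : m * (c * ‖z‖) ≤ c * (‖z‖ * Real.cos φ) := by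
        have : m * (c * ‖z‖) ≤ Real.cos φ * (c * ‖z‖) :=
          mul_le_mul_of_nonneg_right hm2 (by positivity)
        linarith [this, (by ring : Real.cos φ * (c * ‖z‖) = c * (‖z‖ * Real.cos φ))]
      linarith [mul_add m κ (c * ‖z‖), e1, e2]
    have h3 : κ + c * (‖z‖ * Real.cos φ) ≤ b.re := by
      rw [hbre]
      nlinarith [mul_le_mul_of_nonneg_left hzre hc.le]
    linarith
  have hkey2 : C * (‖l‖ + κ + c * ‖z‖) ≤ ‖l + b‖ := by
    have hm1 : m ≤ 1 := min_le_left _ _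
    have h4 : C * (‖l‖ + κ + c * ‖z‖)
        ≤ s * (‖l‖ + ‖b‖) := by
      have e1 : C * ‖l‖ ≤ s * ‖l‖ := by
        have : C ≤ s := by
          calc C = s * m := hC
            _ ≤ s * 1 := mul_le_mul_of_nonneg_left hm1 hs0.le
            _ = s := mul_one s
        exact mul_le_mul_of_nonneg_right this (norm_nonneg l)
      have e2 : C * (κ + c * ‖z‖) ≤ s * ‖b‖ := by
        have : C * (κ + c * ‖z‖) = s * (m * (κ + c * ‖z‖)) := by
          rw [hC]; ring
        rw [this]
        exact mul_le_mul_of_nonneg_left hBlow hs0.le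
      have e3 : C * (‖l‖ + κ + c * ‖z‖)
          = C * ‖l‖ + C * (κ + c * ‖z‖) := by ring
      have e4 : s * (‖l‖ + ‖b‖)
          = s * ‖l‖ + s * ‖b‖ := by ring
      linarith
    linarith
  -- pass to square roots
  have habspow : ‖(l + b) ^ ((1 : ℂ) / 2)‖ = Real.sqrt (‖l + b‖) := by
    have he : ((1 : ℂ) / 2) = ((1 / 2 : ℝ) : ℂ) := by norm_num
    rw [he, Complex.norm_cpow_real, ← Real.sqrt_eq_rpow]
  have hfin : c₀ * (Real.sqrt (‖l‖) + Real.sqrt κ + c * Real.sqrt (‖z‖))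
      ≤ Real.sqrt (‖l + b‖) := by
    have t1 : c₀ ≤ Real.sqrt C / Real.sqrt 3 := by
      calc c₀ = Real.sqrt C / Real.sqrt 3 * min 1 (1 / Real.sqrt c) := hc₀
        _ ≤ Real.sqrt C / Real.sqrt 3 * 1 :=
            mul_le_mul_of_nonneg_left (min_le_left _ _) (by positivity)
        _ = Real.sqrt C / Real.sqrt 3 := mul_one _
    have t2 : c₀ * c ≤ Real.sqrt C / Real.sqrt 3 * Real.sqrt c := by
      have h1 : c₀ ≤ Real.sqrt C / Real.sqrt 3 * (1 / Real.sqrt c) := by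
        rw [hc₀]
        exact mul_le_mul_of_nonneg_left (min_le_right _ _) (by positivity)
      have h2 : c₀ * c ≤ Real.sqrt C / Real.sqrt 3 * (1 / Real.sqrt c) * c :=
        mul_le_mul_of_nonneg_right h1 hc.le
      have h3 : Real.sqrt C / Real.sqrt 3 * (1 / Real.sqrt c) * c
          = Real.sqrt C / Real.sqrt 3 * Real.sqrt c := by
        have h5 : (1 / Real.sqrt c) * c = Real.sqrt c := by
          rw [one_div, inv_mul_eq_div, eq_comm, eq_div_iff hsc.ne', Real.mul_self_sqrt hc.le]
        rw [mul_assoc, h5]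
      linarith
    have step1 : c₀ * (Real.sqrt (‖l‖) + Real.sqrt κ + c * Real.sqrt (‖z‖))
        ≤ Real.sqrt C / Real.sqrt 3 * (Real.sqrt (‖l‖) + Real.sqrt κ
            + Real.sqrt (c * ‖z‖)) := by
      rw [Real.sqrt_mul hc.le]
      have e1 : c₀ * Real.sqrt (‖l‖) ≤ Real.sqrt C / Real.sqrt 3 * Real.sqrt (‖l‖) :=
        mul_le_mul_of_nonneg_right t1 (Real.sqrt_nonneg _)
      have e2 : c₀ * Real.sqrt κ ≤ Real.sqrt C / Real.sqrt 3 * Real.sqrt κ :=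
        mul_le_mul_of_nonneg_right t1 (Real.sqrt_nonneg _)
      have e3 : c₀ * (c * Real.sqrt (‖z‖))
          ≤ Real.sqrt C / Real.sqrt 3 * (Real.sqrt c * Real.sqrt (‖z‖)) := by
        have h7 := mul_le_mul_of_nonneg_right t2 (Real.sqrt_nonneg (‖z‖))
        calc c₀ * (c * Real.sqrt (‖z‖)) = c₀ * c * Real.sqrt (‖z‖) := by ring
          _ ≤ Real.sqrt C / Real.sqrt 3 * Real.sqrt c * Real.sqrt (‖z‖) := h7
          _ = Real.sqrt C / Real.sqrt 3 * (Real.sqrt c * Real.sqrt (‖z‖)) := by ring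
      have d1 : c₀ * (Real.sqrt (‖l‖) + Real.sqrt κ + c * Real.sqrt (‖z‖))
          = c₀ * Real.sqrt (‖l‖) + c₀ * Real.sqrt κ
            + c₀ * (c * Real.sqrt (‖z‖)) := by ring
      have d2 : Real.sqrt C / Real.sqrt 3 * (Real.sqrt (‖l‖) + Real.sqrt κ
            + Real.sqrt c * Real.sqrt (‖z‖))
          = Real.sqrt C / Real.sqrt 3 * Real.sqrt (‖l‖)
            + Real.sqrt C / Real.sqrt 3 * Real.sqrt κ
            + Real.sqrt C / Real.sqrt 3 * (Real.sqrt c * Real.sqrt (‖z‖)) := by ring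
      linarith
    have step2 : Real.sqrt (‖l‖) + Real.sqrt κ + Real.sqrt (c * ‖z‖)
        ≤ Real.sqrt 3 * Real.sqrt (‖l‖ + κ + c * ‖z‖) :=
      sqrt3_bound _ _ _ (norm_nonneg l) hκ0.le
        (mul_nonneg hc.le (norm_nonneg z))
    have step3 : Real.sqrt C / Real.sqrt 3
          * (Real.sqrt 3 * Real.sqrt (‖l‖ + κ + c * ‖z‖))
        = Real.sqrt C * Real.sqrt (‖l‖ + κ + c * ‖z‖) := by
      have h3 : Real.sqrt 3 ≠ 0 := by positivity
      field_simp
    have step4 : Real.sqrt C * Real.sqrt (‖l‖ + κ + c * ‖z‖)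
        ≤ Real.sqrt (‖l + b‖) := by
      rw [← Real.sqrt_mul hC0.le]
      exact Real.sqrt_le_sqrt hkey2
    have h30 : (0:ℝ) ≤ Real.sqrt C / Real.sqrt 3 := by positivity
    calc c₀ * (Real.sqrt (‖l‖) + Real.sqrt κ + c * Real.sqrt (‖z‖))
        ≤ Real.sqrt C / Real.sqrt 3 * (Real.sqrt (‖l‖) + Real.sqrt κ
            + Real.sqrt (c * ‖z‖)) := step1
      _ ≤ Real.sqrt C / Real.sqrt 3
            * (Real.sqrt 3 * Real.sqrt (‖l‖ + κ + c * ‖z‖)) :=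
          mul_le_mul_of_nonneg_left step2 h30
      _ = Real.sqrt C * Real.sqrt (‖l‖ + κ + c * ‖z‖) := step3
      _ ≤ Real.sqrt (‖l + b‖) := step4
  calc c₀ * (Real.sqrt (‖l‖) + Real.sqrt κ + c * Real.sqrt (‖z‖))
      ≤ Real.sqrt (‖l + b‖) := hfin
    _ = ‖(l + (κ : ℂ) + (c : ℂ) * z) ^ ((1 : ℂ) / 2)‖ := by
        rw [← habspow, hbdef, add_assoc]
end

section
/- Fix constants c_+ , c_− > 0, and let φ₀ ∈ (π/3, π/2), φ ∈ (0, φ₀ − π/3), κ ≥ 1. For λ ∈ Σ_{π−φ₀}, z ∈ Σ_φ, δ ∈ [0, δ*], σ ∈ [0, σ*] define ω_±(λ,z) = √(λ+κ+c_± z), f₁ = (λ+κ)[δ(√c₊ ω₊ + √c₋ ω₋) + 1], and f₂ = σ z (√c₊ ω₊ + √c₋ ω₋) + a₊ √c₊ ω₊ + a₋ √c₋ ω₋, where a_± ≥ c₀ > 0. Then there exists ε > 0, independent of all parameters, such that arg(f₂/f₁) ∈ (−π + ε, π − ε) whenever arg λ ≥ 0, and symmetrically arg(f₂/f₁) ∈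 (−π + ε, π − ε) when arg λ ≤ 0. In particular −1 ∉ closure of the image of f₂/f₁. -/
open Real

noncomputable def omegaPM (cpm κ : ℝ) (l z : ℂ) : ℂ :=
  (l + (κ : ℂ) + (cpm : ℂ) * z) ^ ((1 : ℂ) / 2)

/-- `f₁ = (λ+κ)[δ(√c₊ω₊ + √c₋ω₋) + 1]`. -/
noncomputable def stefanF1 (cP cM κ δ : ℝ) (l z : ℂ) : ℂ :=
  (l + (κ : ℂ)) * ((δ : ℂ) * ((Real.sqrt cP : ℂ) * omegaPM cP κ l z
    + (Real.sqrt cM : ℂ) * omegaPM cM κ l z) + 1)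

/-- `f₂ = σz(√c₊ω₊ + √c₋ω₋) + a₊√c₊ω₊ + a₋√c₋ω₋`. -/
noncomputable def stefanF2 (cP cM κ σ aP aM : ℝ) (l z : ℂ) : ℂ :=
  (σ : ℂ) * z * ((Real.sqrt cP : ℂ) * omegaPM cP κ l z
    + (Real.sqrt cM : ℂ) * omegaPM cM κ l z)
  + (aP : ℂ) * (Real.sqrt cP : ℂ) * omegaPM cP κ l z
  + (aM : ℂ) * (Real.sqrt cM : ℂ) * omegaPM cM κ l z


lemma argPolar {r θ : ℝ} (hr : 0 < r) (hθ : θ ∈ Set.Ioc (-π) π) :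
    ((r : ℂ) * Complex.exp (θ * Complex.I)).arg = θ := by
  rw [Complex.arg_real_mul _ hr, Complex.exp_mul_I, Complex.arg_cos_add_sin_mul_I hθ]

lemma argRot {θ : ℝ} {w : ℂ} (hw : w ≠ 0) (h : w.arg + θ ∈ Set.Ioc (-π) π) :
    (Complex.exp (θ * Complex.I) * w).arg = w.arg + θ := by
  conv_lhs => rw [← Complex.norm_mul_exp_arg_mul_I w]
  rw [mul_left_comm, ← Complex.exp_add,
    show (θ : ℂ) * Complex.I + (w.arg : ℂ) * Complex.I = ((w.arg + θ : ℝ) : ℂ) * Complex.I by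
      push_cast; ring]
  exact argPolar (norm_pos_iff.2 hw) h

lemma abs_sin_arg (u : ℂ) : |Real.sin u.arg| = Real.sin |u.arg| := by
  rcases le_or_gt 0 u.arg with h | h
  · rw [abs_of_nonneg h, abs_of_nonneg (Real.sin_nonneg_of_nonneg_of_le_pi h (Complex.arg_le_pi u))]
  · rw [abs_of_neg h, abs_of_neg (Real.sin_neg_of_neg_of_neg_pi_lt h (Complex.neg_pi_lt_arg u)),
      ← Real.sin_neg]

lemma absArgLe {c : ℝ} (hc0 : 0 ≤ c) (hc : c < π/2) {u : ℂ} (hu : u ≠ 0) :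
    |u.arg| ≤ c ↔ 0 < u.re ∧ Real.cos c * |u.im| ≤ Real.sin c * u.re := by
  have habs : 0 < ‖u‖ := norm_pos_iff.2 hu
  have hre : u.re = ‖u‖ * Real.cos u.arg := by
    rw [Complex.cos_arg hu]; field_simp
  have him : |u.im| = ‖u‖ * Real.sin |u.arg| := by
    rw [← abs_sin_arg, ← abs_of_pos habs, ← abs_mul]
    congr 1
    rw [Complex.sin_arg]; field_simp
  have key : Real.sin c * u.re - Real.cos c * |u.im| = ‖u‖ * Real.sin (c - |u.arg|) := by
    rw [Real.sin_sub, hre, him, ← Real.cos_abs]; ring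
  constructor
  · intro h
    have h1 : |u.arg| < π/2 := lt_of_le_of_lt h hc
    have h2 := abs_lt.1 h1
    have hcos : 0 < Real.cos u.arg := Real.cos_pos_of_mem_Ioo ⟨h2.1, h2.2⟩
    refine ⟨by rw [hre]; positivity, ?_⟩
    have hs : 0 ≤ Real.sin (c - |u.arg|) :=
      Real.sin_nonneg_of_nonneg_of_le_pi (by linarith [abs_nonneg u.arg])
        (by linarith [Real.pi_pos, abs_nonneg u.arg])
    nlinarith
  · rintro ⟨h1, h2⟩
    by_contra hcon
    push_neg at hcon
    have h3 : |u.arg| < π/2 := Complex.abs_arg_lt_pi_div_two_iff.2 (Or.inl h1)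
    have hs : Real.sin (c - |u.arg|) < 0 :=
      Real.sin_neg_of_neg_of_neg_pi_lt (by linarith) (by linarith [Real.pi_pos])
    nlinarith

/-- membership in the closed sector `[a,b]`, nonzero. -/
def InS (a b : ℝ) (w : ℂ) : Prop := w ≠ 0 ∧ w.arg ∈ Set.Icc a b

lemma InS.mono {a b a' b' : ℝ} {w : ℂ} (h : InS a b w) (ha : a' ≤ a) (hb : b ≤ b') :
    InS a' b' w := ⟨h.1, le_trans ha h.2.1, le_trans h.2.2 hb⟩

lemma InS.add {a b : ℝ} (hab : a ≤ b) (hba : b - a < π) (ha : -π < a) (hb : b ≤ π)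
    {w₁ w₂ : ℂ} (h₁ : InS a b w₁) (h₂ : InS a b w₂) : InS a b (w₁ + w₂) := by
  have hπ := Real.pi_pos
  set m : ℝ := (a + b) / 2 with hm
  set c : ℝ := (b - a) / 2 with hc
  have hc0 : 0 ≤ c := by simp [hc]; linarith
  have hcπ : c < π/2 := by simp only [hc]; linarith
  have key : ∀ w : ℂ, InS a b w →
      Complex.exp ((-m : ℝ) * Complex.I) * w ≠ 0 ∧
      |(Complex.exp ((-m : ℝ) * Complex.I) * w).arg| ≤ c := by
    rintro w ⟨hw, hw1, hw2⟩
    have harg : (Complex.exp ((-m : ℝ) * Complex.I) * w).arg = w.arg + (-m) :=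
      argRot hw ⟨by simp only [hm]; linarith, by simp only [hm]; linarith⟩
    refine ⟨mul_ne_zero (Complex.exp_ne_zero _) hw, ?_⟩
    rw [harg, abs_le]
    constructor <;> simp only [hm] <;> linarith
  obtain ⟨hu₁, hu₁a⟩ := key w₁ h₁
  obtain ⟨hu₂, hu₂a⟩ := key w₂ h₂
  obtain ⟨hr₁, hi₁⟩ := (absArgLe hc0 hcπ hu₁).1 hu₁a
  obtain ⟨hr₂, hi₂⟩ := (absArgLe hc0 hcπ hu₂).1 hu₂a
  set u : ℂ := Complex.exp ((-m : ℝ) * Complex.I) * (w₁ + w₂) with hu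
  have hure' : u.re = (Complex.exp ((-m : ℝ) * Complex.I) * w₁).re
      + (Complex.exp ((-m : ℝ) * Complex.I) * w₂).re := by
    rw [hu, mul_add, Complex.add_re]
  have huim' : u.im = (Complex.exp ((-m : ℝ) * Complex.I) * w₁).im
      + (Complex.exp ((-m : ℝ) * Complex.I) * w₂).im := by
    rw [hu, mul_add, Complex.add_im]
  have hure : 0 < u.re := by rw [hure']; linarith
  have habsim : |u.im| ≤ |(Complex.exp ((-m : ℝ) * Complex.I) * w₁).im|
      + |(Complex.exp ((-m : ℝ) * Complex.I) * w₂).im| := huim' ▸ abs_add_le _ _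
  have hcc : 0 ≤ Real.cos c := Real.cos_nonneg_of_mem_Icc ⟨by linarith, le_of_lt hcπ⟩
  have huim : Real.cos c * |u.im| ≤ Real.sin c * u.re := by
    rw [hure']; nlinarith [mul_le_mul_of_nonneg_left habsim hcc]
  have hune : u ≠ 0 := fun h => by simp [h] at hure
  have huarg : |u.arg| ≤ c := (absArgLe hc0 hcπ hune).2 ⟨hure, huim⟩
  have hwne : w₁ + w₂ ≠ 0 := by
    intro h; rw [hu, h, mul_zero] at hune; exact hune rfl
  have habsle := abs_le.1 huarg
  have harg : (Complex.exp ((m : ℝ) * Complex.I) * u).arg = u.arg + m :=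
    argRot hune ⟨by simp only [hm]; linarith [habsle.1], by simp only [hm]; linarith [habsle.2]⟩
  have hwu : Complex.exp ((m : ℝ) * Complex.I) * u = w₁ + w₂ := by
    rw [hu, ← mul_assoc, ← Complex.exp_add,
      show ((m : ℝ) : ℂ) * Complex.I + ((-m : ℝ) : ℂ) * Complex.I = 0 by push_cast; ring,
      Complex.exp_zero, one_mul]
  refine ⟨hwne, ?_⟩
  rw [← hwu, harg]
  constructor <;> simp only [hm] <;> [linarith [habsle.1]; linarith [habsle.2]]

lemma InS.addl {a b : ℝ} (hab : a ≤ b) (hba : b - a < π) (ha : -π < a) (hb : b ≤ π)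
    {w₁ w₂ : ℂ} (h₁ : w₁ = 0 ∨ InS a b w₁) (h₂ : InS a b w₂) : InS a b (w₁ + w₂) := by
  rcases h₁ with h₁ | h₁
  · rw [h₁, zero_add]; exact h₂
  · exact h₁.add hab hba ha hb h₂

lemma sqrtHalf {w : ℂ} (hw : w ≠ 0) :
    w ^ ((1:ℂ)/2) ≠ 0 ∧ (w ^ ((1:ℂ)/2)).arg = w.arg / 2 := by
  have habs : 0 < ‖w‖ := norm_pos_iff.2 hw
  have hrep : w ^ ((1:ℂ)/2)
      = ((Real.exp (Real.log (‖w‖) / 2) : ℝ) : ℂ)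
        * Complex.exp (((w.arg / 2 : ℝ) : ℂ) * Complex.I) := by
    rw [Complex.cpow_def_of_ne_zero hw,
      show Complex.log w * ((1:ℂ)/2) = ((Real.log (‖w‖) / 2 : ℝ) : ℂ)
          + ((w.arg / 2 : ℝ) : ℂ) * Complex.I by
        rw [Complex.log]; push_cast; ring,
      Complex.exp_add, Complex.ofReal_exp]
  have hmem : w.arg / 2 ∈ Set.Ioc (-π) π := by
    have h1 := Complex.neg_pi_lt_arg w
    have h2 := Complex.arg_le_pi w
    have hπ := Real.pi_pos
    exact ⟨by linarith, by linarith⟩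
  constructor
  · rw [hrep]
    exact mul_ne_zero (Complex.ofReal_ne_zero.2 (Real.exp_pos _).ne') (Complex.exp_ne_zero _)
  · rw [hrep]
    exact argPolar (Real.exp_pos _) hmem

lemma baseInS (φ₀ φ κ c : ℝ) (hφ₀ : φ₀ ∈ Set.Ioo (π/3) (π/2)) (hφ : φ ∈ Set.Ioo 0 (φ₀ - π/3))
    (hκ : 0 < κ) (hc : 0 < c) (l z : ℂ) (hl : l ≠ 0) (hl0 : 0 ≤ l.arg)
    (hlu : l.arg ≤ π - φ₀) (hz : z ≠ 0) (hza : |z.arg| ≤ φ) :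
    InS (-φ) (π - φ₀) (l + (κ:ℂ) + (c:ℂ) * z) := by
  have hπ := Real.pi_pos
  obtain ⟨hφ₀1, hφ₀2⟩ := hφ₀
  obtain ⟨hφ1, hφ2⟩ := hφ
  have hκne : ((κ:ℝ):ℂ) ≠ 0 := Complex.ofReal_ne_zero.2 (ne_of_gt hκ)
  have hκarg : ((κ:ℝ):ℂ).arg = 0 := Complex.arg_ofReal_of_nonneg hκ.le
  have hlκ : InS 0 (π - φ₀) (l + (κ:ℂ)) := by
    refine InS.add (by linarith) (by linarith) (by linarith) (by linarith)
      ⟨hl, hl0, hlu⟩ ⟨hκne, ?_⟩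
    rw [hκarg]; exact ⟨le_refl 0, by linarith⟩
  have hcz : InS (-φ) φ ((c:ℂ) * z) :=
    ⟨mul_ne_zero (Complex.ofReal_ne_zero.2 hc.ne') hz,
      by rw [Complex.arg_real_mul z hc]; exact abs_le.1 hza⟩
  exact InS.add (by linarith) (by linarith) (by linarith) (by linarith)
    (hlκ.mono (by linarith) (le_refl _)) (hcz.mono (le_refl _) (by linarith))


lemma stefanCore (cP cM φ₀ φ aPv aMv δ σ κ : ℝ)
    (hcP : 0 < cP) (hcM : 0 < cM)
    (hφ₀ : φ₀ ∈ Set.Ioo (π/3) (π/2)) (hφ : φ ∈ Set.Ioo 0 (φ₀ - π/3))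
    (haP : 0 < aPv) (haM : 0 < aMv) (hδ : 0 ≤ δ) (hσ : 0 ≤ σ) (hκ : 0 < κ)
    (l z : ℂ) (hl : l ≠ 0) (hl0 : 0 ≤ l.arg) (hlu : l.arg ≤ π - φ₀)
    (hz : z ≠ 0) (hza : |z.arg| ≤ φ) :
    stefanF2 cP cM κ σ aPv aMv l z / stefanF1 cP cM κ δ l z ≠ 0 ∧
    (stefanF2 cP cM κ σ aPv aMv l z / stefanF1 cP cM κ δ l z).arg
      ∈ Set.Icc (-(3/2 * (φ + (π - φ₀)))) (3/2 * φ + (π - φ₀)/2) := by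
  have hπ := Real.pi_pos
  obtain ⟨hφ₀1, hφ₀2⟩ := hφ₀
  obtain ⟨hφ1, hφ2⟩ := hφ
  set β := π - φ₀ with hβdef
  have hβ1 : π/2 < β := by rw [hβdef]; linarith
  have hβ2 : β < 2*π/3 := by rw [hβdef]; linarith
  have hφπ : φ < π/6 := by linarith
  set S := (Real.sqrt cP : ℂ) * omegaPM cP κ l z + (Real.sqrt cM : ℂ) * omegaPM cM κ l z with hSdef
  -- the ω pieces
  have hω : ∀ c : ℝ, 0 < c → InS (-(φ/2)) (β/2) ((Real.sqrt c : ℂ) * omegaPM c κ l z) := by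
    intro c hc
    obtain ⟨hbne, hb1, hb2⟩ := baseInS φ₀ φ κ c ⟨hφ₀1, hφ₀2⟩ ⟨hφ1, hφ2⟩ hκ hc l z hl hl0 hlu hz hza
    obtain ⟨hone, hoarg⟩ := sqrtHalf hbne
    have hs : (0:ℝ) < Real.sqrt c := Real.sqrt_pos.2 hc
    refine ⟨mul_ne_zero (Complex.ofReal_ne_zero.2 hs.ne') hone, ?_⟩
    rw [Complex.arg_real_mul _ hs, omegaPM, hoarg]
    exact ⟨by linarith, by linarith⟩
  -- S
  have hS : InS (-(φ/2)) (β/2) S :=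
    InS.add (by linarith) (by linarith) (by linarith) (by linarith) (hω cP hcP) (hω cM hcM)
  -- D = δ S + 1
  have hone : InS (-(φ/2)) (β/2) (1:ℂ) :=
    ⟨one_ne_zero, by rw [Complex.arg_one]; exact ⟨by linarith, by linarith⟩⟩
  have hD : InS (-(φ/2)) (β/2) ((δ:ℂ) * S + 1) := by
    rcases eq_or_lt_of_le hδ with h | h
    · rw [← h]; simpa using hone
    · have hδS : InS (-(φ/2)) (β/2) ((δ:ℂ) * S) :=
        ⟨mul_ne_zero (Complex.ofReal_ne_zero.2 h.ne') hS.1,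
          by rw [Complex.arg_real_mul _ h]; exact hS.2⟩
      exact InS.add (by linarith) (by linarith) (by linarith) (by linarith) hδS hone
  -- f₁
  have hlκ : InS 0 β (l + (κ:ℂ)) := by
    refine InS.add (by linarith) (by linarith) (by linarith) (by linarith)
      ⟨hl, hl0, hlu⟩ ⟨Complex.ofReal_ne_zero.2 (ne_of_gt hκ), ?_⟩
    rw [Complex.arg_ofReal_of_nonneg hκ.le]; exact ⟨le_refl 0, by linarith⟩
  have hf₁ne : stefanF1 cP cM κ δ l z ≠ 0 := mul_ne_zero hlκ.1 hD.1
  have hf₁arg : (stefanF1 cP cM κ δ l z).arg ∈ Set.Icc (-(φ/2)) (β + β/2) := by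
    have hm : ((l + (κ:ℂ)) * ((δ:ℂ) * S + 1)).arg = (l + (κ:ℂ)).arg + ((δ:ℂ) * S + 1).arg :=
      Complex.arg_mul hlκ.1 hD.1
        ⟨by linarith [hlκ.2.1, hD.2.1], by linarith [hlκ.2.2, hD.2.2]⟩
    rw [stefanF1, ← hSdef, hm]
    exact ⟨by linarith [hlκ.2.1, hD.2.1], by linarith [hlκ.2.2, hD.2.2]⟩
  -- f₂ pieces
  have hP : InS (-(φ + φ/2)) (φ + β/2) ((aPv:ℂ) * (Real.sqrt cP : ℂ) * omegaPM cP κ l z) := by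
    have he : (aPv:ℂ) * (Real.sqrt cP : ℂ) * omegaPM cP κ l z
        = (aPv:ℂ) * ((Real.sqrt cP : ℂ) * omegaPM cP κ l z) := mul_assoc _ _ _
    have h' : InS (-(φ/2)) (β/2) ((aPv:ℂ) * ((Real.sqrt cP : ℂ) * omegaPM cP κ l z)) :=
      ⟨mul_ne_zero (Complex.ofReal_ne_zero.2 haP.ne') (hω cP hcP).1,
        by rw [Complex.arg_real_mul _ haP]; exact (hω cP hcP).2⟩
    rw [he]
    exact h'.mono (by linarith) (by linarith)
  have hM : InS (-(φ + φ/2)) (φ + β/2) ((aMv:ℂ) * (Real.sqrt cM : ℂ) * omegaPM cM κ l z) := by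
    have he : (aMv:ℂ) * (Real.sqrt cM : ℂ) * omegaPM cM κ l z
        = (aMv:ℂ) * ((Real.sqrt cM : ℂ) * omegaPM cM κ l z) := mul_assoc _ _ _
    have h' : InS (-(φ/2)) (β/2) ((aMv:ℂ) * ((Real.sqrt cM : ℂ) * omegaPM cM κ l z)) :=
      ⟨mul_ne_zero (Complex.ofReal_ne_zero.2 haM.ne') (hω cM hcM).1,
        by rw [Complex.arg_real_mul _ haM]; exact (hω cM hcM).2⟩
    rw [he]
    exact h'.mono (by linarith) (by linarith)
  have hT : (σ:ℂ) * z * S = 0 ∨ InS (-(φ + φ/2)) (φ + β/2) ((σ:ℂ) * z * S) := by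
    rcases eq_or_lt_of_le hσ with h | h
    · left; rw [← h]; simp
    · right
      have hσz : ((σ:ℂ) * z) ≠ 0 := mul_ne_zero (Complex.ofReal_ne_zero.2 h.ne') hz
      have hσzarg : ((σ:ℂ) * z).arg = z.arg := Complex.arg_real_mul z h
      have hzb := abs_le.1 hza
      have hm : ((σ:ℂ) * z * S).arg = ((σ:ℂ) * z).arg + S.arg :=
        Complex.arg_mul hσz hS.1
          ⟨by rw [hσzarg]; linarith [hS.2.1, hzb.1], by rw [hσzarg]; linarith [hS.2.2, hzb.2]⟩
      exact ⟨mul_ne_zero hσz hS.1, by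
        rw [hm, hσzarg]
        exact ⟨by linarith [hS.2.1, hzb.1], by linarith [hS.2.2, hzb.2]⟩⟩
  have hf₂ : InS (-(φ + φ/2)) (φ + β/2) (stefanF2 cP cM κ σ aPv aMv l z) := by
    rw [stefanF2, ← hSdef]
    exact InS.add (by linarith) (by linarith) (by linarith) (by linarith)
      (InS.addl (by linarith) (by linarith) (by linarith) (by linarith) hT hP) hM
  -- quotient
  have hf1inv : (stefanF1 cP cM κ δ l z)⁻¹.arg = -(stefanF1 cP cM κ δ l z).arg := by
    rw [Complex.arg_inv, if_neg]
    intro h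
    rw [h] at hf₁arg
    have := hf₁arg.2
    linarith
  have hsum : (stefanF2 cP cM κ σ aPv aMv l z).arg + (stefanF1 cP cM κ δ l z)⁻¹.arg
      ∈ Set.Ioc (-π) π := by
    rw [hf1inv]
    exact ⟨by linarith [hf₂.2.1, hf₁arg.2], by linarith [hf₂.2.2, hf₁arg.1]⟩
  have hq : (stefanF2 cP cM κ σ aPv aMv l z * (stefanF1 cP cM κ δ l z)⁻¹).arg
      = (stefanF2 cP cM κ σ aPv aMv l z).arg + (stefanF1 cP cM κ δ l z)⁻¹.arg :=
    Complex.arg_mul hf₂.1 (inv_ne_zero hf₁ne) hsum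
  refine ⟨div_ne_zero hf₂.1 hf₁ne, ?_⟩
  rw [div_eq_mul_inv (stefanF2 cP cM κ σ aPv aMv l z) (stefanF1 cP cM κ δ l z), hq, hf1inv]
  exact ⟨by linarith [hf₂.2.1, hf₁arg.2], by linarith [hf₂.2.2, hf₁arg.1]⟩

lemma stefanBound (cP cM φ₀ φ aPv aMv δ σ κ : ℝ)
    (hcP : 0 < cP) (hcM : 0 < cM)
    (hφ₀ : φ₀ ∈ Set.Ioo (π/3) (π/2)) (hφ : φ ∈ Set.Ioo 0 (φ₀ - π/3))
    (haP : 0 < aPv) (haM : 0 < aMv) (hδ : 0 ≤ δ) (hσ : 0 ≤ σ) (hκ : 0 < κ)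
    (l z : ℂ) (hl : l ≠ 0) (hla : |l.arg| ≤ π - φ₀)
    (hz : z ≠ 0) (hza : |z.arg| ≤ φ) :
    stefanF2 cP cM κ σ aPv aMv l z / stefanF1 cP cM κ δ l z ≠ 0 ∧
    |(stefanF2 cP cM κ σ aPv aMv l z / stefanF1 cP cM κ δ l z).arg|
      ≤ 3/2 * (φ + (π - φ₀)) := by
  have hπ := Real.pi_pos
  obtain ⟨hφ₀1, hφ₀2⟩ := hφ₀
  obtain ⟨hφ1, hφ2⟩ := hφ
  have hla' := abs_le.1 hla
  rcases le_or_gt 0 l.arg with hl0 | hl0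
  · obtain ⟨hne, harg⟩ := stefanCore cP cM φ₀ φ aPv aMv δ σ κ hcP hcM ⟨hφ₀1, hφ₀2⟩
      ⟨hφ1, hφ2⟩ haP haM hδ hσ hκ l z hl hl0 hla'.2 hz hza
    exact ⟨hne, abs_le.2 ⟨by linarith [harg.1], by linarith [harg.2]⟩⟩
  · -- conjugate case
    set l' := (starRingEnd ℂ) l with hl'def
    set z' := (starRingEnd ℂ) z with hz'def
    have hl' : l' ≠ 0 := fun h => hl (by simpa [hl'def] using congrArg (starRingEnd ℂ) h)
    have hz' : z' ≠ 0 := fun h => hz (by simpa [hz'def] using congrArg (starRingEnd ℂ) h)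
    have hlargne : l.arg ≠ π := by intro h; rw [h] at hl0; linarith
    have hzargne : z.arg ≠ π := by
      intro h; rw [h] at hza; have := abs_le.1 hza; linarith [this.2]
    have hl'arg : l'.arg = -l.arg := by rw [hl'def, Complex.arg_conj, if_neg hlargne]
    have hz'arg : z'.arg = -z.arg := by rw [hz'def, Complex.arg_conj, if_neg hzargne]
    have hl'0 : 0 ≤ l'.arg := by rw [hl'arg]; linarith
    have hl'u : l'.arg ≤ π - φ₀ := by rw [hl'arg]; linarith [hla'.1]
    have hz'a : |z'.arg| ≤ φ := by rw [hz'arg, abs_neg]; exact hza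
    obtain ⟨hne', harg'⟩ := stefanCore cP cM φ₀ φ aPv aMv δ σ κ hcP hcM ⟨hφ₀1, hφ₀2⟩
      ⟨hφ1, hφ2⟩ haP haM hδ hσ hκ l' z' hl' hl'0 hl'u hz' hz'a
    -- conjugation identities
    have hhalf : (starRingEnd ℂ) ((1:ℂ)/2) = (1:ℂ)/2 := by
      rw [show ((1:ℂ)/2) = ((1/2 : ℝ) : ℂ) by norm_num, Complex.conj_ofReal]
    have hω : ∀ c : ℝ, 0 < c →
        (starRingEnd ℂ) (omegaPM c κ l' z') = omegaPM c κ l z := by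
      intro c hc
      have hbase := baseInS φ₀ φ κ c ⟨hφ₀1, hφ₀2⟩ ⟨hφ1, hφ2⟩ hκ hc l' z' hl' hl'0 hl'u hz' hz'a
      have hbne : (l' + (κ:ℂ) + (c:ℂ) * z').arg ≠ π := by
        intro h
        have := hbase.2.2
        rw [h] at this
        linarith
      have hconjbase : (starRingEnd ℂ) (l' + (κ:ℂ) + (c:ℂ) * z') = l + (κ:ℂ) + (c:ℂ) * z := by
        simp [hl'def, hz'def, map_add, map_mul, Complex.conj_ofReal]
      calc (starRingEnd ℂ) (omegaPM c κ l' z')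
          = (starRingEnd ℂ) ((l' + (κ:ℂ) + (c:ℂ) * z') ^ ((starRingEnd ℂ) ((1:ℂ)/2))) := by
            rw [omegaPM, hhalf]
        _ = (starRingEnd ℂ) (l' + (κ:ℂ) + (c:ℂ) * z') ^ ((1:ℂ)/2) :=
            (Complex.conj_cpow _ _ hbne).symm
        _ = omegaPM c κ l z := by rw [hconjbase, omegaPM]
    have hf1 : (starRingEnd ℂ) (stefanF1 cP cM κ δ l' z') = stefanF1 cP cM κ δ l z := by
      simp only [stefanF1, map_add, map_mul, map_one, Complex.conj_ofReal,
        hω cP hcP, hω cM hcM, hl'def, Complex.conj_conj]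
      rw [← hl'def, hω cP hcP, hω cM hcM]
    have hf2 : (starRingEnd ℂ) (stefanF2 cP cM κ σ aPv aMv l' z') = stefanF2 cP cM κ σ aPv aMv l z := by
      simp only [stefanF2, map_add, map_mul, Complex.conj_ofReal,
        hω cP hcP, hω cM hcM, hl'def, hz'def, Complex.conj_conj]
      rw [← hl'def, ← hz'def, hω cP hcP, hω cM hcM]
    have hq : stefanF2 cP cM κ σ aPv aMv l z / stefanF1 cP cM κ δ l z
        = (starRingEnd ℂ) (stefanF2 cP cM κ σ aPv aMv l' z' / stefanF1 cP cM κ δ l' z') := by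
      rw [map_div₀, hf1, hf2]
    have hq'ne : (stefanF2 cP cM κ σ aPv aMv l' z' / stefanF1 cP cM κ δ l' z').arg ≠ π := by
      intro h
      have := harg'.2
      rw [h] at this
      linarith
    have hqne : stefanF2 cP cM κ σ aPv aMv l z / stefanF1 cP cM κ δ l z ≠ 0 := by
      rw [hq]
      intro h
      exact hne' (by simpa using congrArg (starRingEnd ℂ) h)
    refine ⟨hqne, ?_⟩
    rw [hq, Complex.arg_conj, if_neg hq'ne, abs_neg]
    exact abs_le.2 ⟨by linarith [harg'.1], by linarith [harg'.2]⟩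

lemma distNegOne {ε₀ : ℝ} (hε : 0 < ε₀) (hε2 : ε₀ ≤ π/2) {w : ℂ} (hw : w ≠ 0)
    (h : |w.arg| ≤ π - ε₀) : Real.sin ε₀ ≤ ‖w + 1‖ := by
  have hπ := Real.pi_pos
  rcases le_or_gt 0 w.re with hre | hre
  · have h1 : (1:ℝ) ≤ (w+1).re := by simp only [Complex.add_re, Complex.one_re]; linarith
    calc Real.sin ε₀ ≤ 1 := Real.sin_le_one _
      _ ≤ (w+1).re := h1
      _ ≤ ‖w+1‖ := Complex.re_le_norm _
  · have habs : 0 < ‖w‖ := norm_pos_iff.2 hw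
    have hreq : w.re = ‖w‖ * Real.cos w.arg := by
      rw [Complex.cos_arg hw]; field_simp
    have himq : w.im = ‖w‖ * Real.sin w.arg := by
      rw [Complex.sin_arg]; field_simp
    have hcos : Real.cos w.arg < 0 := by
      by_contra hc
      push_neg at hc
      have := mul_nonneg habs.le hc
      linarith
    have hθπ : π/2 < |w.arg| := by
      by_contra hc
      push_neg at hc
      have := Real.cos_nonneg_of_mem_Icc (x := w.arg)
        ⟨by linarith [(abs_le.1 hc).1], (abs_le.1 hc).2⟩
      linarith
    have hθle : |w.arg| ≤ π := by
      rcases abs_cases w.arg with ⟨h1, _⟩ | ⟨h1, _⟩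
      · rw [h1]; exact Complex.arg_le_pi w
      · rw [h1]; linarith [Complex.neg_pi_lt_arg w]
    have hsin : Real.sin ε₀ ≤ |Real.sin w.arg| := by
      rw [abs_sin_arg, show Real.sin |w.arg| = Real.sin (π - |w.arg|) from (Real.sin_pi_sub _).symm]
      apply Real.strictMonoOn_sin.monotoneOn ⟨by linarith, by linarith⟩
        ⟨by linarith, by linarith⟩ (by linarith)
    have hsq : Real.sin w.arg ^ 2 ≤ ‖w+1‖ ^ 2 := by
      have h1 : ‖w+1‖ ^ 2 = (w.re+1)^2 + w.im^2 := by
        rw [Complex.sq_norm, Complex.normSq_apply]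
        simp only [Complex.add_re, Complex.add_im, Complex.one_re, Complex.one_im]
        ring
      rw [h1, hreq, himq]
      nlinarith [sq_nonneg (‖w‖ + Real.cos w.arg), Real.sin_sq_add_cos_sq w.arg]
    have : |Real.sin w.arg| ≤ ‖w+1‖ := by
      have := Real.sqrt_le_sqrt hsq
      rwa [Real.sqrt_sq_eq_abs, Real.sqrt_sq (norm_nonneg _)] at this
    linarith

/-- Angular separation of `f₂/f₁` from the negative real axis, uniformly in all parameters,
and consequently `-1` is not in the closure of the image of `f₂/f₁`. -/
theorem stmt3 (cP cM c₀ δs σs φ₀ φ : ℝ)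
    (hcP : 0 < cP) (hcM : 0 < cM) (hc₀ : 0 < c₀) (hδs : 0 < δs) (hσs : 0 < σs)
    (hφ₀ : φ₀ ∈ Set.Ioo (π / 3) (π / 2)) (hφ : φ ∈ Set.Ioo 0 (φ₀ - π / 3))
    (aP aM : ℝ × ℝ → ℝ)
    (haP : ∀ μ ∈ Set.Icc (0 : ℝ) δs ×ˢ Set.Icc (0 : ℝ) σs, c₀ ≤ aP μ)
    (haM : ∀ μ ∈ Set.Icc (0 : ℝ) δs ×ˢ Set.Icc (0 : ℝ) σs, c₀ ≤ aM μ) :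
    ∃ ε > (0 : ℝ),
      (∀ (l z : ℂ) (δ σ κ : ℝ), 1 ≤ κ →
        δ ∈ Set.Icc (0 : ℝ) δs → σ ∈ Set.Icc (0 : ℝ) σs →
        l ≠ 0 → |l.arg| < π - φ₀ → z ≠ 0 → |z.arg| < φ →
        |(stefanF2 cP cM κ σ (aP (δ, σ)) (aM (δ, σ)) l z
            / stefanF1 cP cM κ δ l z).arg| < π - ε) ∧
      (-1 : ℂ) ∉ closure { w : ℂ | ∃ (l z : ℂ) (δ σ κ : ℝ), 1 ≤ κ ∧
        δ ∈ Set.Icc (0 : ℝ) δs ∧ σ ∈ Set.Icc (0 : ℝ) σs ∧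
        l ≠ 0 ∧ |l.arg| < π - φ₀ ∧ z ≠ 0 ∧ |z.arg| < φ ∧
        w = stefanF2 cP cM κ σ (aP (δ, σ)) (aM (δ, σ)) l z
            / stefanF1 cP cM κ δ l z } := by
  have hπ := Real.pi_pos
  obtain ⟨hφ₀1, hφ₀2⟩ := hφ₀
  obtain ⟨hφ1, hφ2⟩ := hφ
  set ε₀ : ℝ := π - 3/2 * (φ + (π - φ₀)) with hε₀def
  have hε₀pos : 0 < ε₀ := by rw [hε₀def]; linarith
  have hε₀half : ε₀ ≤ π/2 := by rw [hε₀def]; linarith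
  have key : ∀ (l z : ℂ) (δ σ κ : ℝ), 1 ≤ κ →
      δ ∈ Set.Icc (0:ℝ) δs → σ ∈ Set.Icc (0:ℝ) σs →
      l ≠ 0 → |l.arg| < π - φ₀ → z ≠ 0 → |z.arg| < φ →
      (stefanF2 cP cM κ σ (aP (δ, σ)) (aM (δ, σ)) l z / stefanF1 cP cM κ δ l z ≠ 0 ∧
       |(stefanF2 cP cM κ σ (aP (δ, σ)) (aM (δ, σ)) l z
          / stefanF1 cP cM κ δ l z).arg| ≤ π - ε₀) := by
    intro l z δ σ κ hκ hδ hσ hl hla hz hza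
    have hmem : (δ, σ) ∈ Set.Icc (0:ℝ) δs ×ˢ Set.Icc (0:ℝ) σs := ⟨hδ, hσ⟩
    have h := stefanBound cP cM φ₀ φ (aP (δ, σ)) (aM (δ, σ)) δ σ κ hcP hcM
      ⟨hφ₀1, hφ₀2⟩ ⟨hφ1, hφ2⟩
      (lt_of_lt_of_le hc₀ (haP _ hmem)) (lt_of_lt_of_le hc₀ (haM _ hmem)) hδ.1 hσ.1
      (by linarith) l z hl hla.le hz hza.le
    exact ⟨h.1, by linarith [h.2]⟩
  refine ⟨ε₀/2, by linarith, ?_, ?_⟩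
  · intro l z δ σ κ hκ hδ hσ hl hla hz hza
    have := (key l z δ σ κ hκ hδ hσ hl hla hz hza).2
    linarith
  · intro hmem
    have hsub : { w : ℂ | ∃ (l z : ℂ) (δ σ κ : ℝ), 1 ≤ κ ∧
        δ ∈ Set.Icc (0 : ℝ) δs ∧ σ ∈ Set.Icc (0 : ℝ) σs ∧
        l ≠ 0 ∧ |l.arg| < π - φ₀ ∧ z ≠ 0 ∧ |z.arg| < φ ∧
        w = stefanF2 cP cM κ σ (aP (δ, σ)) (aM (δ, σ)) l z
            / stefanF1 cP cM κ δ l z }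
        ⊆ {w : ℂ | Real.sin ε₀ ≤ ‖w + 1‖} := by
      rintro w ⟨l, z, δ, σ, κ, hκ, hδ, hσ, hl, hla, hz, hza, rfl⟩
      obtain ⟨h1, h2⟩ := key l z δ σ κ hκ hδ hσ hl hla hz hza
      exact distNegOne hε₀pos hε₀half h1 h2
    have hclosed : IsClosed {w : ℂ | Real.sin ε₀ ≤ ‖w + 1‖} :=
      isClosed_le continuous_const
        (continuous_norm.comp (continuous_id.add continuous_const))
    have hE := closure_minimal hsub hclosed hmem
    simp only [Set.mem_setOf_eq] at hE
    norm_num at hE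
    have := Real.sin_pos_of_pos_of_lt_pi hε₀pos (lt_of_le_of_lt hε₀half (by linarith))
    linarith
end

section
/- With m(λ,z) as in the previous statement (the Stefan symbol), the functions m₀ = 1/m, m₁ = (λ+κ)/m, m₂ = √z/m, m₃ = σ z √(λ+κ)/m, m₄ = σ z^{3/2}/m, m₅ = δ(λ+κ)^{3/2}/m, and m₆ = δ(λ+κ)√z / m are uniformly bounded on Σ_{π−φ₀} × Σ_φ × [0,δ*] × [0,σ*] × [1,∞) (the last factor for κ). -/
open Real

noncomputable def stefanSymbol (cP cM κ δ σ aP aM : ℝ) (l z : ℂ) : ℂ :=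
  l + (κ : ℂ)
  + ((σ : ℂ) * z + (δ : ℂ) * (l + (κ : ℂ))) *
      ((Real.sqrt cP : ℂ) * omegaPM cP κ l z + (Real.sqrt cM : ℂ) * omegaPM cM κ l z)
  + (aP : ℂ) * (Real.sqrt cP : ℂ) * omegaPM cP κ l z
  + (aM : ℂ) * (Real.sqrt cM : ℂ) * omegaPM cM κ l z

namespace StefanAux

noncomputable def eθ (t : ℝ) : ℂ := Complex.exp (t * Complex.I)

lemma eθ_mul (s t : ℝ) : eθ s * eθ t = eθ (s + t) := by
  rw [eθ, eθ, eθ, ← Complex.exp_add]; push_cast; ring_nf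

lemma re_eθ (r t : ℝ) : ((r : ℂ) * eθ t).re = r * Real.cos t := by
  rw [eθ]
  simp [Complex.mul_re, Complex.exp_ofReal_mul_I_re]

lemma abs_eθ (t : ℝ) : ‖eθ t‖ = 1 := by
  rw [eθ, Complex.norm_exp]; simp

lemma abs_coe_eθ (r t : ℝ) (hr : 0 ≤ r) : ‖(r : ℂ) * eθ t‖ = r := by
  rw [norm_mul, abs_eθ, Complex.norm_real, Real.norm_eq_abs, abs_of_nonneg hr, mul_one]

lemma polar1 (w : ℂ) : w = ((‖w‖ : ℝ) : ℂ) * eθ w.arg :=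
  (Complex.norm_mul_exp_arg_mul_I w).symm

lemma polarPow (w : ℂ) (hw : w ≠ 0) (r : ℝ) :
    w ^ (r : ℂ) = ((‖w‖ ^ r : ℝ) : ℂ) * eθ (r * w.arg) := by
  have habs : (0:ℝ) < ‖w‖ := norm_pos_iff.mpr hw
  rw [Complex.cpow_def_of_ne_zero hw,
    show Complex.log w = ((Real.log (‖w‖) : ℝ) : ℂ) + (w.arg : ℂ) * Complex.I from rfl]
  rw [add_mul, Complex.exp_add, eθ]
  rw [Real.rpow_def_of_pos habs]
  congr 1
  · rw [Complex.ofReal_exp]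
    push_cast
    ring_nf
  · push_cast; ring_nf

lemma eθ_rot (r c t : ℝ) : eθ c * ((r:ℂ) * eθ t) = (r:ℂ) * eθ (t + c) := by
  rw [mul_left_comm, eθ_mul, add_comm]

lemma cos_ge (t β : ℝ) (h : |t| ≤ β) (hβ : β ≤ π) : Real.cos β ≤ Real.cos t := by
  rw [← Real.cos_abs t]
  exact Real.cos_le_cos_of_nonneg_of_le_pi (abs_nonneg t) hβ h

lemma arg_window (c x : ℝ) (hc0 : 0 ≤ c) (hc : c < π/2) (hx : |x| ≤ π + c)
    (hcos : Real.cos c ≤ Real.cos x) : |x| ≤ c := by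
  by_contra hlt
  push_neg at hlt
  rcases le_or_gt |x| π with h1 | h1
  · have h2 := Real.cos_lt_cos_of_nonneg_of_le_pi hc0 h1 hlt
    rw [Real.cos_abs] at h2; linarith
  · have hpi := Real.pi_pos
    have h2 : Real.cos |x| < 0 :=
      Real.cos_neg_of_pi_div_two_lt_of_lt (by linarith) (by linarith)
    have h3 : 0 ≤ Real.cos c := Real.cos_nonneg_of_mem_Icc ⟨by linarith, le_of_lt hc⟩
    rw [Real.cos_abs] at h2; linarith

lemma abs_arg_le_iff (w : ℂ) (hw : w ≠ 0) (ct : ℝ) (h0 : 0 ≤ ct) (hπ : ct ≤ π) :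
    |w.arg| ≤ ct ↔ ‖w‖ * Real.cos ct ≤ w.re := by
  have habs : (0:ℝ) < ‖w‖ := norm_pos_iff.mpr hw
  have hre : w.re = ‖w‖ * Real.cos w.arg := by
    rw [Complex.cos_arg hw]; field_simp
  constructor
  · intro h
    rw [hre]
    have h2 := cos_ge _ _ h hπ
    nlinarith
  · intro h
    rw [hre] at h
    have h2 : Real.cos ct ≤ Real.cos w.arg := by nlinarith
    by_contra hlt
    push_neg at hlt
    have h3 := Real.cos_lt_cos_of_nonneg_of_le_pi h0 (Complex.abs_arg_le_pi w) hlt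
    rw [Real.cos_abs] at h3; linarith

lemma arg_add_pos_le (w : ℂ) (hw : w ≠ 0) (r : ℝ) (hr : 0 < r)
    (hw' : w + (r:ℂ) ≠ 0) (ct : ℝ)
    (hct1 : π/2 ≤ ct) (hct2 : ct ≤ π) (h : |w.arg| ≤ ct) : |(w + (r:ℂ)).arg| ≤ ct := by
  have hpi := Real.pi_pos
  have h0 : (0:ℝ) ≤ ct := by linarith
  rw [abs_arg_le_iff w hw ct h0 hct2] at h
  rw [abs_arg_le_iff _ hw' ct h0 hct2]
  have hcc : Real.cos ct ≤ 0 :=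
    Real.cos_nonpos_of_pi_div_two_le_of_le hct1 (by linarith)
  have hre2 : (w + (r:ℂ)).re = w.re + r := by simp
  rw [hre2]
  rcases le_or_gt 0 (w.re + r) with hpos | hneg
  · have : ‖w + (r:ℂ)‖ * Real.cos ct ≤ 0 :=
      mul_nonpos_of_nonneg_of_nonpos (norm_nonneg _) hcc
    linarith
  · set A := ‖w‖ with hA
    set B := ‖w + (r:ℂ)‖ with hB
    have hA2 : A^2 = w.re^2 + w.im^2 := by
      rw [hA, Complex.sq_norm, Complex.normSq_apply]; ring
    have hB2 : B^2 = (w.re + r)^2 + w.im^2 := by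
      rw [hB, Complex.sq_norm, Complex.normSq_apply]; simp; ring
    have hAnn : 0 ≤ A := norm_nonneg _
    have hBnn : 0 ≤ B := norm_nonneg _
    have hcc1 : -1 ≤ Real.cos ct := Real.neg_one_le_cos ct
    have hx : -(A * Real.cos ct) ≥ -w.re := by linarith
    have hsq : (w.re)^2 ≤ A^2 * (Real.cos ct)^2 := by nlinarith
    have hsq2 : (w.re + r)^2 ≤ (w.re)^2 := by nlinarith
    have h1mcc : 0 ≤ 1 - (Real.cos ct)^2 := by nlinarith
    have k1 : (w.re+r)^2 * (1 - (Real.cos ct)^2) ≤ (w.re)^2 * (1-(Real.cos ct)^2) :=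
      mul_le_mul_of_nonneg_right hsq2 h1mcc
    have k2 : (w.re)^2 * (1-(Real.cos ct)^2) ≤ w.im^2 * (Real.cos ct)^2 := by nlinarith [hsq]
    have hsq3 : (w.re + r)^2 ≤ B^2 * (Real.cos ct)^2 := by
      nlinarith [hB2, k1, k2, sq_nonneg (Real.cos ct)]
    nlinarith [hsq3, mul_nonneg hBnn (neg_nonneg.mpr hcc), hneg]

lemma half_lb (x y κ A R : ℝ) (hκ : 1 ≤ κ) (hA : 0 ≤ A) (hA2 : A^2 = x^2 + y^2)
    (hx : -A/2 ≤ x) (hR2 : R^2 = (x+κ)^2 + y^2) (hR : 0 ≤ R) : 1/2 ≤ R := by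
  rcases le_or_gt (-(κ/2)) x with hc | hc
  · nlinarith [sq_nonneg y, sq_nonneg (x + κ - 1/2)]
  · have h5 : -2*x ≤ A := by linarith
    have h6 : 3*x^2 ≤ y^2 := by nlinarith
    nlinarith [sq_nonneg (2*x + κ/2)]

lemma assemble (num absm S K cβ C : ℝ) (h1 : num ≤ K * S) (h2 : cβ * S ≤ absm)
    (hcβ : 0 < cβ) (hS : 0 ≤ S) (hK : 0 ≤ K) (hm : 0 < absm) (hC : K ≤ C * cβ) :
    num / absm ≤ C := by
  have hC0 : 0 ≤ C := by nlinarith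
  rw [div_le_iff₀ hm]
  nlinarith [mul_le_mul_of_nonneg_right hC hS, mul_le_mul_of_nonneg_left h2 hC0]

end StefanAux

open StefanAux

set_option maxHeartbeats 8000000 in
/-- Uniform boundedness of the symbols `m₀,…,m₆` built from the Stefan symbol `m`
on `Σ_{π-φ₀} × Σ_φ × [0,δ*] × [0,σ*] × [1,∞)`. -/
theorem stmt5 (cP cM c₀ aP aM δs σs φ₀ φ : ℝ)
    (hcP : 0 < cP) (hcM : 0 < cM) (hc₀ : 0 < c₀) (haP : c₀ ≤ aP) (haM : c₀ ≤ aM)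
    (hδs : 0 < δs) (hσs : 0 < σs)
    (hφ₀ : φ₀ ∈ Set.Ioo (π / 3) (π / 2)) (hφ : φ ∈ Set.Ioo 0 (φ₀ - π / 3)) :
    ∃ C : ℝ, ∀ (l z : ℂ) (δ σ κ : ℝ), 1 ≤ κ →
      δ ∈ Set.Icc (0 : ℝ) δs → σ ∈ Set.Icc (0 : ℝ) σs →
      l ≠ 0 → |l.arg| < π - φ₀ → z ≠ 0 → |z.arg| < φ →
      (‖1 / stefanSymbol cP cM κ δ σ aP aM l z‖ ≤ C ∧
       ‖(l + (κ : ℂ)) / stefanSymbol cP cM κ δ σ aP aM l z‖ ≤ C ∧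
       ‖z ^ ((1 : ℂ) / 2) / stefanSymbol cP cM κ δ σ aP aM l z‖ ≤ C ∧
       ‖(σ : ℂ) * z * (l + (κ : ℂ)) ^ ((1 : ℂ) / 2)
          / stefanSymbol cP cM κ δ σ aP aM l z‖ ≤ C ∧
       ‖(σ : ℂ) * z ^ ((3 : ℂ) / 2)
          / stefanSymbol cP cM κ δ σ aP aM l z‖ ≤ C ∧
       ‖(δ : ℂ) * (l + (κ : ℂ)) ^ ((3 : ℂ) / 2)
          / stefanSymbol cP cM κ δ σ aP aM l z‖ ≤ C ∧
       ‖(δ : ℂ) * (l + (κ : ℂ)) * z ^ ((1 : ℂ) / 2)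
          / stefanSymbol cP cM κ δ σ aP aM l z‖ ≤ C) := by
  obtain ⟨hφ₀1, hφ₀2⟩ := hφ₀
  obtain ⟨hφ1, hφ2⟩ := hφ
  have hpi := Real.pi_pos
  set Θ : ℝ := π - φ₀ with hΘdef
  set β2 : ℝ := (Θ + φ)/2 with hβ2def
  set β : ℝ := 3*(Θ + φ)/4 with hβdef
  have hΘ1 : π/2 ≤ Θ := by rw [hΘdef]; linarith
  have hΘ2 : Θ ≤ π := by rw [hΘdef]; linarith
  have hβ2a : 0 ≤ β2 := by rw [hβ2def, hΘdef]; linarith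
  have hβ2b : β2 < π/3 := by rw [hβ2def, hΘdef]; linarith
  have hβa : 0 ≤ β := by rw [hβdef, hΘdef]; linarith
  have hβb : β < π/2 := by rw [hβdef, hΘdef]; linarith
  have hcosβ : 0 < Real.cos β := Real.cos_pos_of_mem_Ioo ⟨by linarith, hβb⟩
  have hcosβ2 : (1:ℝ)/2 < Real.cos β2 := by
    have h := Real.cos_lt_cos_of_nonneg_of_le_pi hβ2a (by linarith : π/3 ≤ π) hβ2b
    rw [Real.cos_pi_div_three] at h; exact h
  set K3 : ℝ := ((2/cP) ^ ((1:ℝ)/2)) / (c₀ * Real.sqrt cP) with hK3def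
  set K4 : ℝ := ((2:ℝ) ^ ((1:ℝ)/2)) / Real.sqrt cP with hK4def
  set K5 : ℝ := ((2/cP) ^ ((1:ℝ)/2)) / Real.sqrt cP with hK5def
  have hsP : (0:ℝ) < Real.sqrt cP := Real.sqrt_pos.mpr hcP
  have hsM : (0:ℝ) < Real.sqrt cM := Real.sqrt_pos.mpr hcM
  have hK3nn : 0 ≤ K3 := by rw [hK3def]; positivity
  have hK4nn : 0 ≤ K4 := by rw [hK4def]; positivity
  have hK5nn : 0 ≤ K5 := by rw [hK5def]; positivity
  refine ⟨(2 + K3 + K4 + K5)/Real.cos β, ?_⟩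
  intro l z δ σ κ hκ hδm hσm hl hla hz hza
  obtain ⟨hδ0, hδ1⟩ := hδm
  obtain ⟨hσ0, hσ1⟩ := hσm
  -- hla already folded by set
  set L : ℂ := l + (κ:ℂ) with hLdef
  set wp : ℂ := L + (cP:ℂ) * z with hwpdef
  set wm : ℂ := L + (cM:ℂ) * z with hwmdef
  set RL : ℝ := ‖L‖ with hRLdef
  set Rz : ℝ := ‖z‖ with hRzdef
  set Rp : ℝ := ‖wp‖ with hRpdef
  set Rm : ℝ := ‖wm‖ with hRmdef
  set θ : ℝ := L.arg with hθdef
  set av : ℝ := z.arg with havdef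
  set Ap : ℝ := wp.arg with hApdef
  set Am : ℝ := wm.arg with hAmdef
  have hRz0 : (0:ℝ) < Rz := by rw [hRzdef]; exact norm_pos_iff.mpr hz
  have hRznn : (0:ℝ) ≤ Rz := le_of_lt hRz0
  have hRLnn : (0:ℝ) ≤ RL := by rw [hRLdef]; exact norm_nonneg _
  have harg : |l.arg| ≤ Θ := le_of_lt hla
  -- lower bound on Re l
  have habsl : (0:ℝ) < ‖l‖ := norm_pos_iff.mpr hl
  have hRel : -(‖l‖)/2 ≤ l.re := by
    have h1 : l.re = ‖l‖ * Real.cos l.arg := by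
      rw [Complex.cos_arg hl]; field_simp
    have h2 : Real.cos Θ ≤ Real.cos l.arg := cos_ge _ _ harg hΘ2
    have h3 : Real.cos Θ = -Real.cos φ₀ := by rw [hΘdef, Real.cos_pi_sub]
    have h4 : Real.cos φ₀ ≤ 1/2 := by
      have h5 := Real.cos_le_cos_of_nonneg_of_le_pi (by linarith : (0:ℝ) ≤ π/3)
        (by linarith : φ₀ ≤ π) (le_of_lt hφ₀1)
      rw [Real.cos_pi_div_three] at h5; exact h5
    have hca : (-1:ℝ)/2 ≤ Real.cos l.arg := by linarith
    have h6 := mul_le_mul_of_nonneg_left hca habsl.le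
    rw [h1]; linarith
  have hlre2 : (‖l‖)^2 = l.re^2 + l.im^2 := by
    rw [Complex.sq_norm, Complex.normSq_apply]; ring
  have hRL2 : RL^2 = (l.re + κ)^2 + l.im^2 := by
    rw [hRLdef, Complex.sq_norm, hLdef, Complex.normSq_apply]; simp; ring
  have hRLhalf : (1:ℝ)/2 ≤ RL :=
    half_lb l.re l.im κ (‖l‖) RL hκ habsl.le hlre2 hRel hRL2 hRLnn
  have hL0 : L ≠ 0 := by
    have : (0:ℝ) < ‖L‖ := by rw [← hRLdef]; linarith
    exact norm_pos_iff.mp this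
  have hθb : |θ| ≤ Θ := by
    rw [hθdef, hLdef]
    exact arg_add_pos_le l hl κ (by linarith) (by rw [← hLdef]; exact hL0) Θ hΘ1 hΘ2 harg
  have hav : |av| ≤ φ := le_of_lt hza
  obtain ⟨hθb1, hθb2⟩ := abs_le.mp hθb
  obtain ⟨hav1, hav2⟩ := abs_le.mp hav
  -- key analysis of w = L + c z
  have key : ∀ (c:ℝ), 0 < c → ∀ w : ℂ, w = L + (c:ℂ)*z →
      (RL + c*Rz)/2 ≤ ‖w‖ ∧ |w.arg - (θ+av)/2| ≤ β2 := by
    intro c hc w hw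
    have hRwnn : (0:ℝ) ≤ ‖w‖ := norm_nonneg _
    have hLp : L = ((RL:ℝ):ℂ) * eθ θ := by rw [hRLdef, hθdef]; exact polar1 L
    have hzp : z = ((Rz:ℝ):ℂ) * eθ av := by rw [hRzdef, havdef]; exact polar1 z
    have hwpolar : w = ((RL:ℝ):ℂ) * eθ θ + (((c*Rz:ℝ)):ℂ) * eθ av := by
      rw [hw]
      conv_lhs => rw [hLp, hzp]
      push_cast; ring
    have e1 : (eθ (-((θ+av)/2)) * w).re = ‖w‖ * Real.cos (w.arg - (θ+av)/2) := by
      conv_lhs => rw [polar1 w]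
      rw [eθ_rot, re_eθ, show w.arg + -((θ+av)/2) = w.arg - (θ+av)/2 from by ring]
    have e2 : (eθ (-((θ+av)/2)) * w).re = (RL + c*Rz) * Real.cos ((θ-av)/2) := by
      rw [hwpolar, mul_add, eθ_rot, eθ_rot, Complex.add_re, re_eθ, re_eθ,
        show θ + -((θ+av)/2) = (θ-av)/2 from by ring,
        show av + -((θ+av)/2) = -((θ-av)/2) from by ring, Real.cos_neg]
      ring
    have hid : ‖w‖ * Real.cos (w.arg - (θ+av)/2)
        = (RL + c*Rz) * Real.cos ((θ-av)/2) := by rw [← e1, e2]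
    have hcosθa : Real.cos β2 ≤ Real.cos ((θ-av)/2) := by
      apply cos_ge _ _ (abs_le.mpr ⟨by rw [hβ2def]; linarith only [hθb1, hθb2, hav1, hav2, hΘdef, hφ₀1, hφ₀2, hφ1, hφ2, hpi],
        by rw [hβ2def]; linarith only [hθb1, hθb2, hav1, hav2, hΘdef, hφ₀1, hφ₀2, hφ1, hφ2, hpi]⟩)
      linarith only [hβ2b, hpi]
    have htri : ‖w‖ ≤ RL + c*Rz := by
      rw [hw]
      calc ‖L + (c:ℂ)*z‖ ≤ ‖L‖ + ‖(c:ℂ)*z‖ :=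
            norm_add_le _ _
        _ = RL + c*Rz := by
            rw [norm_mul, Complex.norm_real, Real.norm_eq_abs, abs_of_pos hc, ← hRLdef, ← hRzdef]
    have hcRz : (0:ℝ) ≤ c*Rz := (mul_pos hc hRz0).le
    have hRLRz : (0:ℝ) < RL + c*Rz := by linarith only [hRLhalf, hcRz]
    have hcosβ2' : (0:ℝ) < Real.cos β2 := by linarith only [hcosβ2]
    have hco1 := Real.cos_le_one (w.arg - (θ+av)/2)
    have p1 : (RL + c*Rz) * Real.cos β2 ≤ (RL + c*Rz) * Real.cos ((θ-av)/2) :=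
      mul_le_mul_of_nonneg_left hcosθa (by linarith only [hRLRz])
    have p2 : (0:ℝ) < (RL + c*Rz) * Real.cos β2 := mul_pos hRLRz hcosβ2'
    have p3 : ‖w‖ * Real.cos (w.arg - (θ+av)/2) ≤ ‖w‖ :=
      mul_le_of_le_one_right hRwnn hco1
    have hRwpos : (0:ℝ) < ‖w‖ := by linarith only [hid, p1, p2, p3]
    have p4 : (RL + c*Rz) * (1/2) ≤ (RL + c*Rz) * Real.cos β2 :=
      mul_le_mul_of_nonneg_left (le_of_lt hcosβ2) (by linarith only [hRLRz])
    have hlb : (RL + c*Rz)/2 ≤ ‖w‖ := by linarith only [hid, p1, p3, p4]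
    have hcosA : Real.cos β2 ≤ Real.cos (w.arg - (θ+av)/2) := by
      have p5 : ‖w‖ * Real.cos β2 ≤ (RL + c*Rz) * Real.cos β2 :=
        mul_le_mul_of_nonneg_right htri (le_of_lt hcosβ2')
      have h9 : ‖w‖ * Real.cos β2 ≤ ‖w‖ * Real.cos (w.arg - (θ+av)/2) := by
        linarith only [hid, p1, p5]
      exact le_of_mul_le_mul_left h9 hRwpos
    refine ⟨hlb, arg_window β2 _ hβ2a (by linarith only [hβ2b, hpi]) ?_ hcosA⟩
    have hwarg := abs_le.mp (Complex.abs_arg_le_pi w)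
    rw [abs_le]
    constructor
    · rw [hβ2def]; obtain ⟨hw1, hw2⟩ := hwarg; linarith only [hw1, hw2, hθb1, hθb2, hav1, hav2, hΘdef, hφ₀1, hφ₀2, hφ1, hφ2, hpi]
    · rw [hβ2def]; obtain ⟨hw1, hw2⟩ := hwarg; linarith only [hw1, hw2, hθb1, hθb2, hav1, hav2, hΘdef, hφ₀1, hφ₀2, hφ1, hφ2, hpi]
  obtain ⟨hRplb, hApw'⟩ := key cP hcP wp hwpdef
  obtain ⟨hRmlb, hAmw'⟩ := key cM hcM wm hwmdef
  rw [← hRpdef] at hRplb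
  rw [← hApdef] at hApw'
  rw [← hRmdef] at hRmlb
  rw [← hAmdef] at hAmw'
  have hRpnn : (0:ℝ) ≤ Rp := by rw [hRpdef]; exact norm_nonneg _
  have hRmnn : (0:ℝ) ≤ Rm := by rw [hRmdef]; exact norm_nonneg _
  have hwp0 : wp ≠ 0 := by
    apply norm_pos_iff.mp
    rw [← hRpdef]; linarith only [hRplb, hRLhalf, mul_pos hcP hRz0]
  have hwm0 : wm ≠ 0 := by
    apply norm_pos_iff.mp
    rw [← hRmdef]; linarith only [hRmlb, hRLhalf, mul_pos hcM hRz0]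
  set Wp : ℝ := Rp ^ ((1:ℝ)/2) with hWpdef
  set Wm : ℝ := Rm ^ ((1:ℝ)/2) with hWmdef
  have hWpnn : (0:ℝ) ≤ Wp := by rw [hWpdef]; positivity
  have hWmnn : (0:ℝ) ≤ Wm := by rw [hWmdef]; positivity
  have homp : omegaPM cP κ l z = ((Wp:ℝ):ℂ) * eθ (Ap/2) := by
    have h1 : (l + (κ:ℂ) + (cP:ℂ)*z) = wp := by rw [hwpdef, hLdef]
    simp only [omegaPM, h1]
    rw [show ((1:ℂ)/2) = (((1/2:ℝ)):ℂ) from by norm_num]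
    rw [polarPow wp hwp0 (1/2), hWpdef, hRpdef, hApdef,
      show (1/2:ℝ) * wp.arg = wp.arg/2 from by ring]
  have homm : omegaPM cM κ l z = ((Wm:ℝ):ℂ) * eθ (Am/2) := by
    have h1 : (l + (κ:ℂ) + (cM:ℂ)*z) = wm := by rw [hwmdef, hLdef]
    simp only [omegaPM, h1]
    rw [show ((1:ℂ)/2) = (((1/2:ℝ)):ℂ) from by norm_num]
    rw [polarPow wm hwm0 (1/2), hWmdef, hRmdef, hAmdef,
      show (1/2:ℝ) * wm.arg = wm.arg/2 from by ring]
  have hLp : L = ((RL:ℝ):ℂ) * eθ θ := by rw [hRLdef, hθdef]; exact polar1 L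
  have hzp : z = ((Rz:ℝ):ℂ) * eθ av := by rw [hRzdef, havdef]; exact polar1 z
  set r1 : ℝ := RL with hr1def
  set r2 : ℝ := σ * Real.sqrt cP * Rz * Wp with hr2def
  set r3 : ℝ := σ * Real.sqrt cM * Rz * Wm with hr3def
  set r4 : ℝ := δ * Real.sqrt cP * RL * Wp with hr4def
  set r5 : ℝ := δ * Real.sqrt cM * RL * Wm with hr5def
  set r6 : ℝ := aP * Real.sqrt cP * Wp with hr6def
  set r7 : ℝ := aM * Real.sqrt cM * Wm with hr7def
  have hr1nn : 0 ≤ r1 := by rw [hr1def]; exact hRLnn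
  have hr2nn : 0 ≤ r2 := by
    rw [hr2def]; exact mul_nonneg (mul_nonneg (mul_nonneg hσ0 (Real.sqrt_nonneg _)) hRznn) hWpnn
  have hr3nn : 0 ≤ r3 := by
    rw [hr3def]; exact mul_nonneg (mul_nonneg (mul_nonneg hσ0 (Real.sqrt_nonneg _)) hRznn) hWmnn
  have hr4nn : 0 ≤ r4 := by
    rw [hr4def]; exact mul_nonneg (mul_nonneg (mul_nonneg hδ0 (Real.sqrt_nonneg _)) hRLnn) hWpnn
  have hr5nn : 0 ≤ r5 := by
    rw [hr5def]; exact mul_nonneg (mul_nonneg (mul_nonneg hδ0 (Real.sqrt_nonneg _)) hRLnn) hWmnn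
  have hr6nn : 0 ≤ r6 := by
    rw [hr6def]; exact mul_nonneg (mul_nonneg (by linarith only [hc₀, haP]) (Real.sqrt_nonneg _)) hWpnn
  have hr7nn : 0 ≤ r7 := by
    rw [hr7def]; exact mul_nonneg (mul_nonneg (by linarith only [hc₀, haM]) (Real.sqrt_nonneg _)) hWmnn
  set S : ℝ := r1 + r2 + r3 + r4 + r5 + r6 + r7 with hSdef
  have hSnn : 0 ≤ S := by
    rw [hSdef]; linarith only [hr1nn, hr2nn, hr3nn, hr4nn, hr5nn, hr6nn, hr7nn]
  set cc : ℝ := 3*(θ+av)/4 with hccdef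
  have hmeq : stefanSymbol cP cM κ δ σ aP aM l z =
      ((r1:ℝ):ℂ) * eθ θ + ((r2:ℝ):ℂ) * eθ (av + Ap/2) + ((r3:ℝ):ℂ) * eθ (av + Am/2)
      + ((r4:ℝ):ℂ) * eθ (θ + Ap/2) + ((r5:ℝ):ℂ) * eθ (θ + Am/2)
      + ((r6:ℝ):ℂ) * eθ (Ap/2) + ((r7:ℝ):ℂ) * eθ (Am/2) := by
    simp only [stefanSymbol, homp, homm]
    rw [show l + (κ:ℂ) = L from rfl]
    rw [hLp]
    conv_lhs => rw [hzp]
    rw [← eθ_mul av (Ap/2), ← eθ_mul av (Am/2), ← eθ_mul θ (Ap/2), ← eθ_mul θ (Am/2)]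
    rw [hr1def, hr2def, hr3def, hr4def, hr5def, hr6def, hr7def]
    push_cast
    ring
  clear_value Θ β2 β K3 K4 K5 L wp wm RL Rz Rp Rm θ av Ap Am Wp Wm r1 r2 r3 r4 r5 r6 r7 S cc
  obtain ⟨hAp1, hAp2⟩ := abs_le.mp hApw'
  obtain ⟨hAm1, hAm2⟩ := abs_le.mp hAmw'
  have hang1 : |θ - cc| ≤ β := by
    rw [abs_le]
    constructor <;> linarith only [hθb1, hθb2, hav1, hav2, hccdef, hβdef, hβ2def, hΘdef, hφ1, hφ2, hφ₀1, hφ₀2, hpi]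
  have hang2 : |av + Ap/2 - cc| ≤ β := by
    rw [abs_le]
    constructor <;> linarith only [hθb1, hθb2, hav1, hav2, hccdef, hβdef, hβ2def, hΘdef, hφ1, hφ2, hφ₀1, hφ₀2, hpi, hAp1, hAp2]
  have hang3 : |av + Am/2 - cc| ≤ β := by
    rw [abs_le]
    constructor <;> linarith only [hθb1, hθb2, hav1, hav2, hccdef, hβdef, hβ2def, hΘdef, hφ1, hφ2, hφ₀1, hφ₀2, hpi, hAm1, hAm2]
  have hang4 : |θ + Ap/2 - cc| ≤ β := by
    rw [abs_le]
    constructor <;> linarith only [hθb1, hθb2, hav1, hav2, hccdef, hβdef, hβ2def, hΘdef, hφ1, hφ2, hφ₀1, hφ₀2, hpi, hAp1, hAp2]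
  have hang5 : |θ + Am/2 - cc| ≤ β := by
    rw [abs_le]
    constructor <;> linarith only [hθb1, hθb2, hav1, hav2, hccdef, hβdef, hβ2def, hΘdef, hφ1, hφ2, hφ₀1, hφ₀2, hpi, hAm1, hAm2]
  have hang6 : |Ap/2 - cc| ≤ β := by
    rw [abs_le]
    constructor <;> linarith only [hθb1, hθb2, hav1, hav2, hccdef, hβdef, hβ2def, hΘdef, hφ1, hφ2, hφ₀1, hφ₀2, hpi, hAp1, hAp2]
  have hang7 : |Am/2 - cc| ≤ β := by
    rw [abs_le]
    constructor <;> linarith only [hθb1, hθb2, hav1, hav2, hccdef, hβdef, hβ2def, hΘdef, hφ1, hφ2, hφ₀1, hφ₀2, hpi, hAm1, hAm2]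
  have hβpi : β ≤ π := by linarith only [hβb, hpi]
  have hre : Real.cos β * S ≤ (eθ (-cc) * stefanSymbol cP cM κ δ σ aP aM l z).re := by
    rw [hmeq]
    rw [mul_add, mul_add, mul_add, mul_add, mul_add, mul_add]
    rw [eθ_rot, eθ_rot, eθ_rot, eθ_rot, eθ_rot, eθ_rot, eθ_rot]
    simp only [Complex.add_re, re_eθ, ← sub_eq_add_neg]
    have c1 := mul_le_mul_of_nonneg_left (cos_ge _ _ hang1 hβpi) hr1nn
    have c2 := mul_le_mul_of_nonneg_left (cos_ge _ _ hang2 hβpi) hr2nn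
    have c3 := mul_le_mul_of_nonneg_left (cos_ge _ _ hang3 hβpi) hr3nn
    have c4 := mul_le_mul_of_nonneg_left (cos_ge _ _ hang4 hβpi) hr4nn
    have c5 := mul_le_mul_of_nonneg_left (cos_ge _ _ hang5 hβpi) hr5nn
    have c6 := mul_le_mul_of_nonneg_left (cos_ge _ _ hang6 hβpi) hr6nn
    have c7 := mul_le_mul_of_nonneg_left (cos_ge _ _ hang7 hβpi) hr7nn
    rw [hSdef, mul_add, mul_add, mul_add, mul_add, mul_add, mul_add]
    linarith only [c1, c2, c3, c4, c5, c6, c7]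
  set M : ℂ := stefanSymbol cP cM κ δ σ aP aM l z with hMdef
  clear_value M
  have habsM : Real.cos β * S ≤ ‖M‖ := by
    refine le_trans hre (le_trans (Complex.re_le_norm _) ?_)
    rw [norm_mul, abs_eθ, one_mul]
  have hr1S : r1 ≤ S := by
    rw [hSdef]; linarith only [hr2nn, hr3nn, hr4nn, hr5nn, hr6nn, hr7nn]
  have hM0 : (0:ℝ) < ‖M‖ := by
    have h1 : Real.cos β * r1 ≤ Real.cos β * S := mul_le_mul_of_nonneg_left hr1S hcosβ.le
    have h2 : Real.cos β * (1/2) ≤ Real.cos β * r1 :=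
      mul_le_mul_of_nonneg_left (hr1def ▸ hRLhalf) hcosβ.le
    linarith only [h1, h2, habsM, hcosβ]
  -- rpow facts
  have hzle : Rz ≤ 2/cP * Rp := by
    rw [div_mul_eq_mul_div, le_div_iff₀ hcP]
    linarith only [hRplb, hr1nn]
  have hzW : Rz ^ ((1:ℝ)/2) ≤ (2/cP) ^ ((1:ℝ)/2) * Wp := by
    rw [hWpdef, ← Real.mul_rpow (by positivity) hRpnn]
    exact Real.rpow_le_rpow hRznn hzle (by norm_num)
  have hLle : r1 ≤ 2 * Rp := by linarith only [hRplb, mul_pos hcP hRz0]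
  have hLW : r1 ^ ((1:ℝ)/2) ≤ (2:ℝ) ^ ((1:ℝ)/2) * Wp := by
    rw [hWpdef, ← Real.mul_rpow (by norm_num) hRpnn]
    exact Real.rpow_le_rpow hr1nn hLle (by norm_num)
  have hRL0 : (0:ℝ) < r1 := by linarith only [hRLhalf]
  have hL32 : r1 ^ ((3:ℝ)/2) = r1 * r1 ^ ((1:ℝ)/2) := by
    rw [show (3:ℝ)/2 = 1 + 1/2 from by norm_num, Real.rpow_add hRL0, Real.rpow_one]
  have hz32 : Rz ^ ((3:ℝ)/2) = Rz * Rz ^ ((1:ℝ)/2) := by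
    rw [show (3:ℝ)/2 = 1 + 1/2 from by norm_num, Real.rpow_add hRz0, Real.rpow_one]
  -- abs of numerator pieces
  have habsz12 : ‖z ^ ((1:ℂ)/2)‖ = Rz ^ ((1:ℝ)/2) := by
    rw [show ((1:ℂ)/2) = (((1/2:ℝ)):ℂ) from by norm_num, polarPow z hz (1/2),
      abs_coe_eθ _ _ (by positivity), hRzdef]
  have habsL12 : ‖L ^ ((1:ℂ)/2)‖ = r1 ^ ((1:ℝ)/2) := by
    rw [show ((1:ℂ)/2) = (((1/2:ℝ)):ℂ) from by norm_num, polarPow L hL0 (1/2),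
      abs_coe_eθ _ _ (by positivity), hRLdef]
  have habsz32 : ‖z ^ ((3:ℂ)/2)‖ = Rz ^ ((3:ℝ)/2) := by
    rw [show ((3:ℂ)/2) = (((3/2:ℝ)):ℂ) from by norm_num, polarPow z hz (3/2),
      abs_coe_eθ _ _ (by positivity), hRzdef]
  have habsL32 : ‖L ^ ((3:ℂ)/2)‖ = r1 ^ ((3:ℝ)/2) := by
    rw [show ((3:ℂ)/2) = (((3/2:ℝ)):ℂ) from by norm_num, polarPow L hL0 (3/2),
      abs_coe_eθ _ _ (by positivity), hRLdef]
  -- sums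
  have hSr2 : r2 ≤ S := by
    linarith only [hSdef, hr1nn, hr3nn, hr4nn, hr5nn, hr6nn, hr7nn]
  have hSr4 : r4 ≤ S := by
    linarith only [hSdef, hr1nn, hr2nn, hr3nn, hr5nn, hr6nn, hr7nn]
  have hSr6 : r6 ≤ S := by
    linarith only [hSdef, hr1nn, hr2nn, hr3nn, hr4nn, hr5nn, hr7nn]
  have hcosβne : Real.cos β ≠ 0 := ne_of_gt hcosβ
  have hCcos : (2 + K3 + K4 + K5)/Real.cos β * Real.cos β = 2 + K3 + K4 + K5 :=
    div_mul_cancel₀ _ hcosβne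
  have hK3id : K3 * (c₀ * Real.sqrt cP) = (2/cP) ^ ((1:ℝ)/2) := by
    rw [hK3def, div_mul_cancel₀ _ (by positivity : c₀ * Real.sqrt cP ≠ 0)]
  have hK4id : K4 * Real.sqrt cP = (2:ℝ) ^ ((1:ℝ)/2) := by
    rw [hK4def, div_mul_cancel₀ _ (ne_of_gt hsP)]
  have hK5id : K5 * Real.sqrt cP = (2/cP) ^ ((1:ℝ)/2) := by
    rw [hK5def, div_mul_cancel₀ _ (ne_of_gt hsP)]
  refine ⟨?_, ?_, ?_, ?_, ?_, ?_, ?_⟩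
  · -- 1/m
    rw [norm_div, norm_one]
    refine assemble _ _ S 2 (Real.cos β) _ ?_ habsM hcosβ hSnn (by norm_num) hM0
      (by rw [hCcos]; linarith only [hK3nn, hK4nn, hK5nn])
    linarith only [hSdef, hRLdef, hRLhalf, hr2nn, hr3nn, hr4nn, hr5nn, hr6nn, hr7nn]
  · -- (l+κ)/m
    rw [norm_div, ← hRLdef]
    refine assemble _ _ S 1 (Real.cos β) _ ?_ habsM hcosβ hSnn (by norm_num) hM0
      (by rw [hCcos]; linarith only [hK3nn, hK4nn, hK5nn])
    linarith only [hSdef, hRLdef, hr2nn, hr3nn, hr4nn, hr5nn, hr6nn, hr7nn]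
  · -- z^{1/2}/m
    rw [norm_div, habsz12]
    refine assemble _ _ S K3 (Real.cos β) _ ?_ habsM hcosβ hSnn hK3nn hM0
      (by rw [hCcos]; linarith only [hK4nn, hK5nn])
    have t0 : c₀ * Real.sqrt cP * Wp ≤ aP * Real.sqrt cP * Wp :=
      mul_le_mul_of_nonneg_right (mul_le_mul_of_nonneg_right haP hsP.le) hWpnn
    calc Rz ^ ((1:ℝ)/2) ≤ (2/cP) ^ ((1:ℝ)/2) * Wp := hzW
      _ = K3 * (c₀ * Real.sqrt cP * Wp) := by rw [← hK3id]; ring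
      _ ≤ K3 * (aP * Real.sqrt cP * Wp) := mul_le_mul_of_nonneg_left t0 hK3nn
      _ = K3 * r6 := by rw [hr6def]
      _ ≤ K3 * S := mul_le_mul_of_nonneg_left hSr6 hK3nn
  · -- σ z (l+κ)^{1/2}/m
    rw [norm_div, norm_mul, norm_mul, Complex.norm_real, Real.norm_eq_abs, abs_of_nonneg hσ0, ← hRzdef, habsL12]
    refine assemble _ _ S K4 (Real.cos β) _ ?_ habsM hcosβ hSnn hK4nn hM0
      (by rw [hCcos]; linarith only [hK3nn, hK5nn])
    calc σ * Rz * r1 ^ ((1:ℝ)/2) ≤ σ * Rz * ((2:ℝ) ^ ((1:ℝ)/2) * Wp) :=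
          mul_le_mul_of_nonneg_left hLW (mul_nonneg hσ0 hRznn)
      _ = K4 * (σ * Real.sqrt cP * Rz * Wp) := by rw [← hK4id]; ring
      _ = K4 * r2 := by rw [hr2def]
      _ ≤ K4 * S := mul_le_mul_of_nonneg_left hSr2 hK4nn
  · -- σ z^{3/2}/m
    rw [norm_div, norm_mul, Complex.norm_real, Real.norm_eq_abs, abs_of_nonneg hσ0, habsz32]
    refine assemble _ _ S K5 (Real.cos β) _ ?_ habsM hcosβ hSnn hK5nn hM0
      (by rw [hCcos]; linarith only [hK3nn, hK4nn])
    calc σ * Rz ^ ((3:ℝ)/2) = σ * (Rz * Rz ^ ((1:ℝ)/2)) := by rw [hz32]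
      _ ≤ σ * (Rz * ((2/cP) ^ ((1:ℝ)/2) * Wp)) :=
          mul_le_mul_of_nonneg_left (mul_le_mul_of_nonneg_left hzW hRznn) hσ0
      _ = K5 * (σ * Real.sqrt cP * Rz * Wp) := by rw [← hK5id]; ring
      _ = K5 * r2 := by rw [hr2def]
      _ ≤ K5 * S := mul_le_mul_of_nonneg_left hSr2 hK5nn
  · -- δ (l+κ)^{3/2}/m
    rw [norm_div, norm_mul, Complex.norm_real, Real.norm_eq_abs, abs_of_nonneg hδ0, habsL32]
    refine assemble _ _ S K4 (Real.cos β) _ ?_ habsM hcosβ hSnn hK4nn hM0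
      (by rw [hCcos]; linarith only [hK3nn, hK5nn])
    calc δ * r1 ^ ((3:ℝ)/2) = δ * (r1 * r1 ^ ((1:ℝ)/2)) := by rw [hL32]
      _ ≤ δ * (r1 * ((2:ℝ) ^ ((1:ℝ)/2) * Wp)) :=
          mul_le_mul_of_nonneg_left (mul_le_mul_of_nonneg_left hLW hr1nn) hδ0
      _ = K4 * (δ * Real.sqrt cP * r1 * Wp) := by rw [← hK4id]; ring
      _ = K4 * r4 := by rw [hr4def, hr1def]
      _ ≤ K4 * S := mul_le_mul_of_nonneg_left hSr4 hK4nn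
  · -- δ (l+κ) z^{1/2}/m
    rw [norm_div, norm_mul, norm_mul, Complex.norm_real, Real.norm_eq_abs, abs_of_nonneg hδ0, ← hRLdef, habsz12]
    refine assemble _ _ S K5 (Real.cos β) _ ?_ habsM hcosβ hSnn hK5nn hM0
      (by rw [hCcos]; linarith only [hK3nn, hK4nn])
    calc δ * r1 * Rz ^ ((1:ℝ)/2) ≤ δ * r1 * ((2/cP) ^ ((1:ℝ)/2) * Wp) :=
          mul_le_mul_of_nonneg_left hzW (mul_nonneg hδ0 hr1nn)
      _ = K5 * (δ * Real.sqrt cP * r1 * Wp) := by rw [← hK5id]; ring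
      _ = K5 * r4 := by rw [hr4def, hr1def]
      _ ≤ K5 * S := mul_le_mul_of_nonneg_left hSr4 hK5nn
end

section
/- Let φ₀ ∈ (π/3, π/2), φ ∈ (0, φ₀ − π/3), and σ > 0, κ ≥ 1, c > 0. For λ ∈ Σ_{π−φ₀} with arg λ ≥ 0 and z ∈ Σ_φ, the argument of σ z √(λ + κ + c z) satisfies: there exists ε > 0 (depending only on φ₀, φ) with π − φ₀ ≥ arg(σ z √(λ + κ + c z)) ≥ −(3φ)/2 ≥ −(3φ₀)/2 + π/2 + ε. -/
open Real

private lemma rot_im (u : ℂ) (θ : ℝ) :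
    u.im * Real.cos θ + u.re * Real.sin θ = ‖u‖ * Real.sin (u.arg + θ) := by
  rw [← Complex.norm_mul_sin_arg u, ← Complex.norm_mul_cos_arg u, Real.sin_add]
  ring

private lemma e_mul_e' (θ : ℝ) :
    (Complex.cos θ + Complex.sin θ * Complex.I) *
      (Complex.cos (-θ:ℝ) + Complex.sin (-θ:ℝ) * Complex.I) = 1 := by
  rw [← Complex.exp_mul_I, ← Complex.exp_mul_I, ← Complex.exp_add]
  have : ((θ:ℂ) * Complex.I + ((-θ:ℝ):ℂ) * Complex.I) = 0 := by push_cast; ring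
  rw [this, Complex.exp_zero]

/-- If the rotation of `w` by `θ ∈ (0, π)` has positive imaginary part, then
`arg w ∈ (-θ, π - θ)`. -/
private lemma arg_bounds_of_rot_pos {w : ℂ} {θ : ℝ} (hθ1 : 0 < θ) (hθ2 : θ < π)
    (h : 0 < w.im * Real.cos θ + w.re * Real.sin θ) :
    w ≠ 0 ∧ -θ < w.arg ∧ w.arg < π - θ := by
  set e : ℂ := Complex.cos θ + Complex.sin θ * Complex.I with he
  set e' : ℂ := Complex.cos (-θ:ℝ) + Complex.sin (-θ:ℝ) * Complex.I with he'
  have him : (w * e).im = w.im * Real.cos θ + w.re * Real.sin θ := by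
    rw [he]
    simp only [Complex.mul_im, Complex.add_re, Complex.add_im, Complex.mul_re,
      Complex.cos_ofReal_re, Complex.cos_ofReal_im, Complex.sin_ofReal_re, Complex.sin_ofReal_im,
      Complex.I_re, Complex.I_im]
    ring
  have hune : w * e ≠ 0 := by
    intro h0; rw [h0] at him; simp at him; linarith
  have hw : w ≠ 0 := fun h0 => hune (by rw [h0, zero_mul])
  have hargu_pos : 0 < (w * e).arg := by
    rcases lt_or_eq_of_le (Complex.arg_nonneg_iff.mpr (by linarith [him.ge] : (0:ℝ) ≤ (w*e).im)) with h' | h'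
    · exact h'
    · exfalso
      have := (Complex.arg_eq_zero_iff.mp h'.symm).2
      rw [him] at this; linarith
  have hargu_lt : (w * e).arg < π := by
    apply Complex.arg_lt_pi_iff.mpr
    right; rw [him]; linarith
  have harge' : e'.arg = -θ := Complex.arg_cos_add_sin_mul_I ⟨by linarith, by linarith⟩
  have he'ne : e' ≠ 0 := by
    intro h0
    have := congrArg Complex.arg h0
    rw [harge'] at this; simp at this; linarith
  have hkey : (w * e * e').arg = (w * e).arg + e'.arg := by
    apply Complex.arg_mul hune he'ne
    rw [harge']
    constructor <;> [linarith; linarith [Complex.arg_le_pi (w*e)]]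
  have : w.arg = (w * e).arg + e'.arg := by
    rw [← hkey, mul_assoc, he, he', e_mul_e' θ, mul_one]
  rw [this, harge']
  exact ⟨hw, by linarith, by linarith⟩

/-- If the rotation of `w` by `-θ`, `θ ∈ (0, π)`, has negative imaginary part, then
`arg w < θ`. -/
private lemma arg_lt_of_rot_neg {w : ℂ} {θ : ℝ} (hθ1 : 0 < θ) (hθ2 : θ < π)
    (h : w.im * Real.cos θ - w.re * Real.sin θ < 0) :
    w.arg < θ := by
  set e : ℂ := Complex.cos (-θ:ℝ) + Complex.sin (-θ:ℝ) * Complex.I with he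
  set e' : ℂ := Complex.cos θ + Complex.sin θ * Complex.I with he'
  have him : (w * e).im = w.im * Real.cos θ - w.re * Real.sin θ := by
    rw [he]
    simp only [Complex.mul_im, Complex.add_re, Complex.add_im, Complex.mul_re,
      Complex.cos_ofReal_re, Complex.cos_ofReal_im, Complex.sin_ofReal_re, Complex.sin_ofReal_im,
      Complex.I_re, Complex.I_im, Real.cos_neg, Real.sin_neg]
    ring
  have hune : w * e ≠ 0 := by
    intro h0; rw [h0] at him; simp at him; linarith
  have hargu_neg : (w * e).arg < 0 := Complex.arg_neg_iff.mpr (by rw [him]; exact h)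
  have harge' : e'.arg = θ := Complex.arg_cos_add_sin_mul_I ⟨by linarith, by linarith⟩
  have he'ne : e' ≠ 0 := by
    intro h0
    have := congrArg Complex.arg h0
    rw [harge'] at this; simp at this; linarith
  have hkey : (w * e * e').arg = (w * e).arg + e'.arg := by
    apply Complex.arg_mul hune he'ne
    rw [harge']
    constructor <;> [linarith [Complex.neg_pi_lt_arg (w*e)]; linarith]
  have hcomm : e * e' = 1 := by rw [he, he', mul_comm, e_mul_e' θ]
  have : w.arg = (w * e).arg + e'.arg := by
    rw [← hkey, mul_assoc, hcomm, mul_one]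
  rw [this, harge']
  linarith

private lemma arg_half {w : ℂ} (hw : w ≠ 0) : (w ^ ((1:ℂ)/2)).arg = w.arg / 2 := by
  have h12 : ((1:ℂ)/2) = ((1/2 : ℝ) : ℂ) := by norm_num
  rw [h12, Complex.cpow_ofReal]
  have habs : (0:ℝ) < ‖w‖ ^ (1/2 : ℝ) :=
    Real.rpow_pos_of_pos (norm_pos_iff.mpr hw) _
  rw [Complex.arg_real_mul _ habs]
  have hco : (↑(Real.cos (w.arg * (1/2))) + ↑(Real.sin (w.arg * (1/2))) * Complex.I)
      = Complex.cos ↑(w.arg * (1/2)) + Complex.sin ↑(w.arg * (1/2)) * Complex.I := by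
    push_cast; ring
  have hmem : w.arg * (1/2) ∈ Set.Ioc (-π) π := by
    have h1 := Complex.neg_pi_lt_arg w
    have h2 := Complex.arg_le_pi w
    have hpi := Real.pi_pos
    constructor <;> nlinarith
  rw [hco, Complex.arg_cos_add_sin_mul_I hmem]
  ring

/-- Angle bookkeeping for the surface tension term: for `λ ∈ Σ_{π-φ₀}` with `arg λ ≥ 0` and
`z ∈ Σ_φ`, the argument of `σz√(λ+κ+cz)` lies in `[-(3φ)/2, π-φ₀]`, and
`-(3φ)/2 ≥ -(3φ₀)/2 + π/2 + ε` for some `ε > 0` depending only on `φ₀, φ`. -/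
theorem stmt13 (φ₀ φ : ℝ) (hφ₀ : φ₀ ∈ Set.Ioo (π / 3) (π / 2))
    (hφ : φ ∈ Set.Ioo 0 (φ₀ - π / 3)) :
    ∃ ε > (0 : ℝ), ∀ (σ κ c : ℝ) (l z : ℂ), 0 < σ → 1 ≤ κ → 0 < c →
      l ≠ 0 → |l.arg| < π - φ₀ → 0 ≤ l.arg → z ≠ 0 → |z.arg| < φ →
      ((σ : ℂ) * z * (l + (κ : ℂ) + (c : ℂ) * z) ^ ((1 : ℂ) / 2)).arg ≤ π - φ₀ ∧
      -(3 * φ) / 2 ≤ ((σ : ℂ) * z * (l + (κ : ℂ) + (c : ℂ) * z) ^ ((1 : ℂ) / 2)).arg ∧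
      -(3 * φ₀) / 2 + π / 2 + ε ≤ -(3 * φ) / 2 := by
  obtain ⟨hφ₀1, hφ₀2⟩ := hφ₀
  obtain ⟨hφ1, hφ2⟩ := hφ
  have hpi := Real.pi_pos
  refine ⟨(3 * (φ₀ - φ) - π) / 2, by linarith, ?_⟩
  intro σ κ c l z hσ hκ hc hl hlarg hlarg0 hz hzarg
  rw [abs_lt] at hlarg hzarg
  set w : ℂ := l + (κ:ℂ) + (c:ℂ) * z with hwdef
  -- basic angle facts
  have hzarg1 : -φ < z.arg := hzarg.1
  have hzarg2 : z.arg < φ := hzarg.2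
  have hlarg2 : l.arg < π - φ₀ := hlarg.2
  have hφπ : φ < π / 6 := by linarith
  -- components of w
  have hwim : w.im = l.im + c * z.im := by
    simp [hwdef, Complex.add_im, Complex.mul_im]
  have hwre : w.re = l.re + κ + c * z.re := by
    simp [hwdef, Complex.add_re, Complex.mul_re]
  -- Claim A : rotation by φ has positive imaginary part
  have hsplitA : w.im * Real.cos φ + w.re * Real.sin φ
      = ‖l‖ * Real.sin (l.arg + φ) + κ * Real.sin φ
        + c * (‖z‖ * Real.sin (z.arg + φ)) := by
    rw [← rot_im l φ, ← rot_im z φ, hwim, hwre]; ring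
  have hA : 0 < w.im * Real.cos φ + w.re * Real.sin φ := by
    rw [hsplitA]
    have h1 : 0 ≤ ‖l‖ * Real.sin (l.arg + φ) := by
      apply mul_nonneg (norm_nonneg l)
      apply Real.sin_nonneg_of_nonneg_of_le_pi (by linarith) (by linarith)
    have h2 : 0 < Real.sin φ := Real.sin_pos_of_pos_of_lt_pi hφ1 (by linarith)
    have h3 : 0 < Real.sin (z.arg + φ) :=
      Real.sin_pos_of_pos_of_lt_pi (by linarith) (by linarith)
    have h4 : 0 < ‖z‖ := norm_pos_iff.mpr hz
    have t2 : Real.sin φ ≤ κ * Real.sin φ := le_mul_of_one_le_left h2.le hκ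
    have t3 : 0 < c * (‖z‖ * Real.sin (z.arg + φ)) := mul_pos hc (mul_pos h4 h3)
    linarith
  obtain ⟨hwne, hwlow, _⟩ := arg_bounds_of_rot_pos hφ1 (by linarith) hA
  -- Claim B : rotation by -(π - φ₀) has negative imaginary part
  have hsplitB : w.im * Real.cos (π - φ₀) - w.re * Real.sin (π - φ₀)
      = ‖l‖ * Real.sin (l.arg - (π - φ₀)) + κ * Real.sin (-(π - φ₀))
        + c * (‖z‖ * Real.sin (z.arg - (π - φ₀))) := by
    have hl' := rot_im l (-(π - φ₀))
    have hz' := rot_im z (-(π - φ₀))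
    rw [Real.cos_neg, Real.sin_neg] at hl' hz'
    have el : l.arg + -(π - φ₀) = l.arg - (π - φ₀) := by ring
    have ez : z.arg + -(π - φ₀) = z.arg - (π - φ₀) := by ring
    rw [el] at hl'; rw [ez] at hz'
    rw [Real.sin_neg, hwim, hwre, ← hl', ← hz']; ring
  have hB : w.im * Real.cos (π - φ₀) - w.re * Real.sin (π - φ₀) < 0 := by
    rw [hsplitB]
    have h1 : Real.sin (l.arg - (π - φ₀)) ≤ 0 := by
      apply Real.sin_nonpos_of_nonpos_of_neg_pi_le (by linarith) (by linarith)
    have h2 : 0 < Real.sin (π - φ₀) := Real.sin_pos_of_pos_of_lt_pi (by linarith) (by linarith)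
    have h3 : Real.sin (z.arg - (π - φ₀)) < 0 := by
      apply Real.sin_neg_of_neg_of_neg_pi_lt (by linarith) (by linarith)
    rw [Real.sin_neg]
    have h4 : 0 < ‖z‖ := norm_pos_iff.mpr hz
    have h5 : 0 ≤ ‖l‖ := norm_nonneg l
    have t1 : 0 ≤ ‖l‖ * -Real.sin (l.arg - (π - φ₀)) :=
      mul_nonneg h5 (by linarith)
    have t2 : Real.sin (π - φ₀) ≤ κ * Real.sin (π - φ₀) := le_mul_of_one_le_left h2.le hκ
    have t3 : 0 < c * (‖z‖ * -Real.sin (z.arg - (π - φ₀))) :=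
      mul_pos hc (mul_pos h4 (by linarith))
    linarith
  have hwup : w.arg < π - φ₀ := arg_lt_of_rot_neg (by linarith) (by linarith) hB
  -- the square root
  have hhalf : (w ^ ((1:ℂ)/2)).arg = w.arg / 2 := arg_half hwne
  have hsqne : w ^ ((1:ℂ)/2) ≠ 0 := by
    rw [Ne, Complex.cpow_eq_zero_iff]
    push_neg
    intro h; exact absurd h hwne
  -- arg of the product
  have hargmul : (z * w ^ ((1:ℂ)/2)).arg = z.arg + w.arg / 2 := by
    rw [← hhalf]
    apply Complex.arg_mul hz hsqne
    rw [hhalf]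
    constructor <;> [linarith; linarith]
  have hfinal : ((σ : ℂ) * z * w ^ ((1:ℂ)/2)).arg = z.arg + w.arg / 2 := by
    rw [mul_assoc, Complex.arg_real_mul _ hσ, hargmul]
  rw [hfinal]
  refine ⟨by linarith, by linarith, by linarith⟩
end
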